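/- arXiv:1707.00923 — 3 statements merged into one kernel-verified Lean document; each statement's English description precedes it below -/
import Mathlib

section
/- In the setting of a bounded coercive sesquilinear form a on V and an injective dense-range j ∈ L(V,H), the associated operator A is strictly m-accretive (in particular surjective with bounded inverse), and A⁻¹ = j ∘ 𝒜⁻¹ ∘ k, where 𝒜 : V → V* is the Lax–Milgram operator of a and k : H → V* is the canonical injection y ↦ ⟨y, j(·)⟩_H. -/
/-- The operator `A` associated with `(a, j)` (graph: `(x,y) ∈ A` iff
`∃ u, j u = x ∧ ∀ v, a (u, v) = ⟨y, j v⟩_H`) is strictly m-accretive and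
`A⁻¹ = j ∘ 𝒜⁻¹ ∘ k`, where `𝒜 : V ≃ V*` is the Lax–Milgram isomorphism of `a`
and `k : H → V*`, `k y = ⟨y, j(·)⟩_H`, is the canonical injection.
Concretely: every point of the graph satisfies the strict accretivity estimate,
for every `y ∈ H` the pair `(j (𝒜⁻¹ (k y)), y)` lies in the graph (so `A` is
surjective), and any `(x, y)` in the graph has `x = j (𝒜⁻¹ (k y))`. -/
theorem associated_operator_m_accretive_inverse_formula
    (V H : Type*) [NormedAddCommGroup V] [InnerProductSpace ℂ V] [CompleteSpace V]
    [NormedAddCommGroup H] [InnerProductSpace ℂ H] [CompleteSpace H]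
    (a : V →L[ℂ] V →L⋆[ℂ] ℂ) (α c : ℝ) (hα : 0 < α) (hc : 0 < c)
    (hcoer : ∀ u : V, α * ‖u‖ ^ 2 ≤ (a u u).re)
    (j : V →L[ℂ] H) (hj_inj : Function.Injective j) (hj_dense : DenseRange j)
    (hjc : ∀ u : V, ‖j u‖ ≤ c * ‖u‖)
    (E : V ≃L[ℂ] (V →L⋆[ℂ] ℂ)) (hE : ∀ u v : V, E u v = a u v)
    (k : H →L[ℂ] (V →L⋆[ℂ] ℂ)) (hk : ∀ (y : H) (v : V), k y v = inner ℂ (j v) y) :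
    (∀ x y : H, (∃ u : V, j u = x ∧ ∀ v : V, a u v = inner ℂ (j v) y) →
        (α / c ^ 2) * ‖x‖ ^ 2 ≤ (inner ℂ x y : ℂ).re) ∧
    (∀ y : H, ∃ u : V, j u = j (E.symm (k y)) ∧ ∀ v : V, a u v = inner ℂ (j v) y) ∧
    (∀ x y : H, (∃ u : V, j u = x ∧ ∀ v : V, a u v = inner ℂ (j v) y) →
        x = j (E.symm (k y))) := by
  have key : ∀ x y : H, (∃ u : V, j u = x ∧ ∀ v : V, a u v = inner ℂ (j v) y) →
      x = j (E.symm (k y)) := by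
    rintro x y ⟨u, hu, ha⟩
    have hEu : E u = k y := by
      ext v
      rw [hE, ha, hk]
    have : u = E.symm (k y) := by
      rw [← hEu, ContinuousLinearEquiv.symm_apply_apply]
    rw [← hu, this]
  refine ⟨?_, ?_, key⟩
  · rintro x y ⟨u, hu, ha⟩
    have h1 : (inner ℂ x y : ℂ).re = (a u u).re := by
      rw [← hu, ← ha u]
    have h2 : α * ‖u‖ ^ 2 ≤ (inner ℂ x y : ℂ).re := h1 ▸ hcoer u
    have h3 : ‖x‖ ^ 2 ≤ c ^ 2 * ‖u‖ ^ 2 := by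
      have := hjc u
      rw [hu] at this
      calc ‖x‖ ^ 2 ≤ (c * ‖u‖) ^ 2 := by
            apply pow_le_pow_left₀ (norm_nonneg x) this
        _ = c ^ 2 * ‖u‖ ^ 2 := by ring
    calc (α / c ^ 2) * ‖x‖ ^ 2 ≤ (α / c ^ 2) * (c ^ 2 * ‖u‖ ^ 2) := by
          apply mul_le_mul_of_nonneg_left h3 (by positivity)
      _ = α * ‖u‖ ^ 2 := by field_simp
      _ ≤ _ := h2
  · intro y
    refine ⟨E.symm (k y), rfl, fun v => ?_⟩
    rw [← hE, ContinuousLinearEquiv.apply_symm_apply, hk]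
end

section
/- Let X be a complex Banach space, Ω ⊆ ℂ open, and for each z ∈ Ω let A_z be the generator of a C₀-semigroup T_z on X with ‖T_z(t)‖ ≤ M e^{ωt} for all t ≥ 0 and z ∈ Ω (M, ω independent of z). If z ↦ (λ − A_z)⁻¹ ∈ L(X) is holomorphic on Ω for some λ > ω, then z ↦ (μ − A_z)⁻¹ is holomorphic on Ω for every μ > ω, and ‖(μ − A_z)^{−n}‖ ≤ M/(μ − ω)ⁿ for all n ∈ ℕ, μ > ω. -/
open Filter MeasureTheory Set Topology

set_option maxHeartbeats 1000000

/-- `(x, y)` belongs to the graph of the generator of the semigroup `T`: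
`y = lim_{t→0⁺} t⁻¹ (T(t)x − x)`. -/
def IsGenPoint {X : Type*} [NormedAddCommGroup X] [NormedSpace ℂ X]
    (T : ℝ → X →L[ℂ] X) (x y : X) : Prop :=
  Tendsto (fun t : ℝ => (t : ℂ)⁻¹ • (T t x - x)) (nhdsWithin 0 (Set.Ioi 0)) (nhds y)

namespace SgAux

variable {X : Type*} [NormedAddCommGroup X] [NormedSpace ℂ X]

/-- Bundled hypotheses for a single semigroup. -/
structure SG (T0 : ℝ → X →L[ℂ] X) (M ω : ℝ) : Prop where
  hM : 0 < M
  h0 : T0 0 = 1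
  hadd : ∀ s t : ℝ, 0 ≤ s → 0 ≤ t → T0 (s + t) = (T0 s).comp (T0 t)
  hcont : ∀ x : X, ContinuousOn (fun t : ℝ => T0 t x) (Set.Ici 0)
  hbdd : ∀ t : ℝ, 0 ≤ t → ‖T0 t‖ ≤ M * Real.exp (ω * t)

variable {T0 : ℝ → X →L[ℂ] X} {M ω μ : ℝ}

theorem integral_exp_neg_rate {c : ℝ} (hc : 0 < c) :
    ∫ t in Ioi (0:ℝ), Real.exp (-(c * t)) = 1 / c := by
  have h : ∀ t ∈ Ioi (0:ℝ), HasDerivAt (fun t => -c⁻¹ * Real.exp (-(c * t)))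
      (Real.exp (-(c * t))) t := by
    intro t _
    have h1 : HasDerivAt (fun t : ℝ => -(c * t)) (-c) t := by
      simpa using ((hasDerivAt_id t).const_mul c).fun_neg
    have := (Real.hasDerivAt_exp (-(c * t))).comp t h1
    refine (this.const_mul (-c⁻¹)).congr_deriv ?_
    field_simp
  have hint : IntegrableOn (fun t => Real.exp (-(c * t))) (Ioi (0:ℝ)) := by
    simpa [neg_mul] using exp_neg_integrableOn_Ioi 0 hc
  have htop : Tendsto (fun t => -c⁻¹ * Real.exp (-(c * t))) atTop (𝓝 0) := by
    have : Tendsto (fun t : ℝ => -(c * t)) atTop atBot := by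
      have h2 : Tendsto (fun t : ℝ => c * t) atTop atTop :=
        (tendsto_const_mul_atTop_of_pos hc).2 tendsto_id
      exact tendsto_neg_atTop_atBot.comp h2
    simpa using (Real.tendsto_exp_atBot.comp this).const_mul (-c⁻¹)
  have hcont : ContinuousWithinAt (fun t => -c⁻¹ * Real.exp (-(c * t))) (Ici (0:ℝ)) 0 :=
    (Continuous.continuousWithinAt (by fun_prop))
  have := integral_Ioi_of_hasDerivAt_of_tendsto hcont h hint htop
  rw [this]
  simp [one_div]

theorem cont_integrand (hd : SG T0 M ω) (hμ : ω < μ) (x : X) {s : ℝ} (hs : 0 ≤ s) :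
    ContinuousOn (fun t : ℝ => Real.exp (-(μ * t)) • T0 (s + t) x) (Ici (0:ℝ)) := by
  have h1 : ContinuousOn (fun t : ℝ => T0 (s + t) x) (Ici (0:ℝ)) := by
    exact (hd.hcont x).comp (continuous_add_left s).continuousOn
      (fun t (ht : t ∈ Ici (0:ℝ)) => by
        simp only [mem_Ici] at *; linarith)
  exact ContinuousOn.smul (f := fun t : ℝ => Real.exp (-(μ * t))) (Continuous.continuousOn (by fun_prop)) h1

theorem integrable_aux (hd : SG T0 M ω) (hμ : ω < μ) (x : X) {s : ℝ} (hs : 0 ≤ s) :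
    IntegrableOn (fun t : ℝ => Real.exp (-(μ * t)) • T0 (s + t) x) (Ioi (0:ℝ)) := by
  have hmeas : AEStronglyMeasurable (fun t : ℝ => Real.exp (-(μ * t)) • T0 (s + t) x)
      (volume.restrict (Ioi (0:ℝ))) :=
    ((cont_integrand hd hμ x hs).mono Ioi_subset_Ici_self).aestronglyMeasurable
      measurableSet_Ioi
  have hg : IntegrableOn (fun t : ℝ => (M * Real.exp (ω * s) * ‖x‖) * Real.exp ((ω - μ) * t))
      (Ioi (0:ℝ)) := by
    have := (exp_neg_integrableOn_Ioi 0 (show (0:ℝ) < μ - ω by linarith)).const_mul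
      (M * Real.exp (ω * s) * ‖x‖)
    simpa [neg_mul, IntegrableOn] using this
  refine hg.mono' hmeas ?_
  · filter_upwards [ae_restrict_mem measurableSet_Ioi] with t ht
    have ht0 : (0:ℝ) ≤ t := le_of_lt ht
    have h1 : ‖T0 (s + t) x‖ ≤ M * Real.exp (ω * (s + t)) * ‖x‖ := by
      calc ‖T0 (s + t) x‖ ≤ ‖T0 (s + t)‖ * ‖x‖ := (T0 (s + t)).le_opNorm x
        _ ≤ M * Real.exp (ω * (s + t)) * ‖x‖ := by
            gcongr; exact hd.hbdd _ (by positivity)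
    have hexp : (0:ℝ) < Real.exp (-(μ * t)) := Real.exp_pos _
    rw [norm_smul, Real.norm_eq_abs, abs_of_pos hexp]
    have hkey : Real.exp (-(μ * t)) * Real.exp (ω * (s + t))
        = Real.exp (ω * s) * Real.exp ((ω - μ) * t) := by
      rw [← Real.exp_add, ← Real.exp_add]; ring_nf
    calc Real.exp (-(μ * t)) * ‖T0 (s + t) x‖
        ≤ Real.exp (-(μ * t)) * (M * Real.exp (ω * (s + t)) * ‖x‖) := by gcongr
      _ = (Real.exp (-(μ * t)) * Real.exp (ω * (s + t))) * (M * ‖x‖) := by ring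
      _ = M * Real.exp (ω * s) * ‖x‖ * Real.exp ((ω - μ) * t) := by rw [hkey]; ring

end SgAux

namespace SgAux2
open SgAux

variable {X : Type*} [NormedAddCommGroup X] [NormedSpace ℂ X] [CompleteSpace X]
variable {T0 : ℝ → X →L[ℂ] X} {M ω μ : ℝ}

/-- The Laplace transform of the semigroup. -/
noncomputable def lap (T0 : ℝ → X →L[ℂ] X) (μ : ℝ) (x : X) : X :=
  ∫ t in Ioi (0:ℝ), Real.exp (-(μ * t)) • T0 t x

theorem integrable0 (hd : SG T0 M ω) (hμ : ω < μ) (x : X) :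
    IntegrableOn (fun t : ℝ => Real.exp (-(μ * t)) • T0 t x) (Ioi (0:ℝ)) := by
  simpa using integrable_aux hd hμ x (le_refl (0:ℝ))

theorem pull (hd : SG T0 M ω) (hμ : ω < μ) (x : X) {s : ℝ} (hs : 0 ≤ s) :
    T0 s (lap T0 μ x) = ∫ t in Ioi (0:ℝ), Real.exp (-(μ * t)) • T0 (s + t) x := by
  rw [lap, ← (T0 s).integral_comp_comm (integrable0 hd hμ x)]
  refine setIntegral_congr_fun measurableSet_Ioi (fun t ht => ?_)
  have ht0 : (0:ℝ) ≤ t := le_of_lt ht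
  rw [(T0 s).map_smul_of_tower, hd.hadd s t hs ht0]
  rfl

theorem lap_decay (hd : SG T0 M ω) (hμ : ω < μ) (x : X) (C : ℝ)
    (hC : ∀ t : ℝ, 0 ≤ t → Real.exp (-(ω * t)) * ‖T0 t x‖ ≤ C)
    {s : ℝ} (hs : 0 ≤ s) :
    Real.exp (-(ω * s)) * ‖T0 s (lap T0 μ x)‖ ≤ C / (μ - ω) := by
  have hC0 : 0 ≤ C := le_trans (by positivity) (hC 0 le_rfl)
  have hμω : (0:ℝ) < μ - ω := by linarith
  have hbound : ‖T0 s (lap T0 μ x)‖ ≤ (C * Real.exp (ω * s)) * (1 / (μ - ω)) := by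
    rw [pull hd hμ x hs]
    have hg : IntegrableOn (fun t : ℝ => (C * Real.exp (ω * s)) * Real.exp ((ω - μ) * t))
        (Ioi (0:ℝ)) := by
      have := (exp_neg_integrableOn_Ioi 0 hμω).const_mul (C * Real.exp (ω * s))
      simpa [neg_mul, IntegrableOn] using this
    have h1 : ‖∫ t in Ioi (0:ℝ), Real.exp (-(μ * t)) • T0 (s + t) x‖
        ≤ ∫ t in Ioi (0:ℝ), (C * Real.exp (ω * s)) * Real.exp ((ω - μ) * t) := by
      refine norm_integral_le_of_norm_le hg ?_
      filter_upwards [ae_restrict_mem measurableSet_Ioi] with t ht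
      have ht0 : (0:ℝ) ≤ t := le_of_lt ht
      have h2 : ‖T0 (s + t) x‖ ≤ C * Real.exp (ω * (s + t)) := by
        have h5 := hC (s + t) (by linarith)
        have h6 : Real.exp (-(ω * (s+t))) * Real.exp (ω * (s+t)) = 1 := by
          rw [← Real.exp_add]; simp
        calc ‖T0 (s + t) x‖
            = (Real.exp (-(ω * (s+t))) * Real.exp (ω * (s+t))) * ‖T0 (s + t) x‖ := by
              rw [h6]; ring
          _ = (Real.exp (-(ω * (s+t))) * ‖T0 (s + t) x‖) * Real.exp (ω * (s+t)) := by ring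
          _ ≤ C * Real.exp (ω * (s + t)) :=
              mul_le_mul_of_nonneg_right h5 (le_of_lt (Real.exp_pos _))
      have hkey : Real.exp (-(μ * t)) * Real.exp (ω * (s + t))
          = Real.exp (ω * s) * Real.exp ((ω - μ) * t) := by
        rw [← Real.exp_add, ← Real.exp_add]; ring_nf
      rw [norm_smul, Real.norm_eq_abs, abs_of_pos (Real.exp_pos _)]
      calc Real.exp (-(μ * t)) * ‖T0 (s + t) x‖
          ≤ Real.exp (-(μ * t)) * (C * Real.exp (ω * (s + t))) := by gcongr
        _ = (Real.exp (-(μ * t)) * Real.exp (ω * (s + t))) * C := by ring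
        _ = C * Real.exp (ω * s) * Real.exp ((ω - μ) * t) := by rw [hkey]; ring
    have h4 : (∫ t in Ioi (0:ℝ), (C * Real.exp (ω * s)) * Real.exp ((ω - μ) * t))
        = (C * Real.exp (ω * s)) * (1 / (μ - ω)) := by
      rw [MeasureTheory.integral_const_mul]
      congr 1
      have h7 := integral_exp_neg_rate hμω
      simp only [show ∀ a:ℝ, -((μ - ω) * a) = (ω - μ) * a from fun a => by ring] at h7
      exact h7
    rw [h4] at h1
    exact h1
  calc Real.exp (-(ω * s)) * ‖T0 s (lap T0 μ x)‖
      ≤ Real.exp (-(ω * s)) * ((C * Real.exp (ω * s)) * (1 / (μ - ω))) := by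
        gcongr
    _ = (Real.exp (-(ω * s)) * Real.exp (ω * s)) * (C / (μ - ω)) := by ring
    _ = C / (μ - ω) := by rw [← Real.exp_add]; simp

end SgAux2

namespace SgAux3
open SgAux SgAux2

variable {X : Type*} [NormedAddCommGroup X] [NormedSpace ℂ X] [CompleteSpace X]
variable {T0 : ℝ → X →L[ℂ] X} {M ω μ : ℝ}

/-- The Laplace transform as a continuous linear map. -/
noncomputable def lapL (hd : SG T0 M ω) (hμ : ω < μ) : X →L[ℂ] X :=
  LinearMap.mkContinuous
    { toFun := lap T0 μ
      map_add' := fun x y => by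
        simp only [lap]
        rw [← integral_add (integrable0 hd hμ x) (integrable0 hd hμ y)]
        refine setIntegral_congr_fun measurableSet_Ioi (fun t _ => ?_)
        rw [map_add, smul_add]
      map_smul' := fun c x => by
        simp only [lap, RingHom.id_apply]
        rw [← integral_smul c]
        refine setIntegral_congr_fun measurableSet_Ioi (fun t _ => ?_)
        rw [(T0 t).map_smul, smul_comm] }
    (M * (1 / (μ - ω)))
    (fun x => by
      have h := lap_decay hd hμ x (M * ‖x‖) (fun t ht => by
        have h1 : ‖T0 t x‖ ≤ M * Real.exp (ω * t) * ‖x‖ := by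
          calc ‖T0 t x‖ ≤ ‖T0 t‖ * ‖x‖ := (T0 t).le_opNorm x
            _ ≤ M * Real.exp (ω * t) * ‖x‖ := by gcongr; exact hd.hbdd t ht
        have h6 : Real.exp (-(ω * t)) * Real.exp (ω * t) = 1 := by
          rw [← Real.exp_add]; simp
        calc Real.exp (-(ω * t)) * ‖T0 t x‖
            ≤ Real.exp (-(ω * t)) * (M * Real.exp (ω * t) * ‖x‖) := by gcongr
          _ = (Real.exp (-(ω * t)) * Real.exp (ω * t)) * (M * ‖x‖) := by ring
          _ = M * ‖x‖ := by rw [h6]; ring) (le_refl (0:ℝ))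
      rw [hd.h0] at h
      simp only [ContinuousLinearMap.one_apply, neg_zero, mul_zero, Real.exp_zero,
        one_mul, zero_mul] at h
      calc ‖lap T0 μ x‖ ≤ M * ‖x‖ / (μ - ω) := h
        _ = M * (1 / (μ - ω)) * ‖x‖ := by ring)

theorem lapL_apply (hd : SG T0 M ω) (hμ : ω < μ) (x : X) :
    lapL hd hμ x = lap T0 μ x := rfl

theorem lapL_pow_norm (hd : SG T0 M ω) (hμ : ω < μ) (n : ℕ) :
    ‖(lapL hd hμ) ^ n‖ ≤ M / (μ - ω) ^ n := by
  have hμω : (0:ℝ) < μ - ω := by linarith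
  have key : ∀ n : ℕ, ∀ w : X, ∀ s : ℝ, 0 ≤ s →
      Real.exp (-(ω * s)) * ‖T0 s (((lapL hd hμ) ^ n) w)‖ ≤ M * ‖w‖ / (μ - ω) ^ n := by
    intro n
    induction n with
    | zero =>
      intro w s hs
      simp only [pow_zero, ContinuousLinearMap.one_apply]
      have h1 : ‖T0 s w‖ ≤ M * Real.exp (ω * s) * ‖w‖ := by
        calc ‖T0 s w‖ ≤ ‖T0 s‖ * ‖w‖ := (T0 s).le_opNorm w
          _ ≤ M * Real.exp (ω * s) * ‖w‖ := by gcongr; exact hd.hbdd s hs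
      have h6 : Real.exp (-(ω * s)) * Real.exp (ω * s) = 1 := by
        rw [← Real.exp_add]; simp
      calc Real.exp (-(ω * s)) * ‖T0 s w‖
          ≤ Real.exp (-(ω * s)) * (M * Real.exp (ω * s) * ‖w‖) := by gcongr
        _ = (Real.exp (-(ω * s)) * Real.exp (ω * s)) * (M * ‖w‖) := by ring
        _ = M * ‖w‖ / (μ - ω) ^ 0 := by rw [h6]; simp
    | succ n ih =>
      intro w s hs
      have hstep : ((lapL hd hμ) ^ (n+1)) w = lap T0 μ (((lapL hd hμ) ^ n) w) := by
        rw [pow_succ']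
        rfl
      rw [hstep]
      have := lap_decay hd hμ (((lapL hd hμ) ^ n) w) (M * ‖w‖ / (μ - ω) ^ n)
        (fun t ht => ih w t ht) hs
      calc Real.exp (-(ω * s)) * ‖T0 s (lap T0 μ (((lapL hd hμ) ^ n) w))‖
          ≤ M * ‖w‖ / (μ - ω) ^ n / (μ - ω) := this
        _ = M * ‖w‖ / (μ - ω) ^ (n + 1) := by rw [div_div, ← pow_succ]
  refine ContinuousLinearMap.opNorm_le_bound _ (by have := hd.hM; positivity) (fun w => ?_)
  have h := key n w 0 le_rfl
  rw [hd.h0] at h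
  simp only [ContinuousLinearMap.one_apply, neg_zero, mul_zero, Real.exp_zero, one_mul,
    zero_mul] at h
  calc ‖((lapL hd hμ) ^ n) w‖ ≤ M * ‖w‖ / (μ - ω) ^ n := h
    _ = M / (μ - ω) ^ n * ‖w‖ := by ring

end SgAux3

namespace SgAux4
open SgAux SgAux2

variable {X : Type*} [NormedAddCommGroup X] [NormedSpace ℂ X] [CompleteSpace X]
variable {T0 : ℝ → X →L[ℂ] X} {M ω μ : ℝ}

theorem shift_integral (f : ℝ → X) (h : ℝ) :
    (∫ t in Ioi (0:ℝ), f (t + h)) = ∫ s in Ioi h, f s := by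
  rw [← integral_indicator measurableSet_Ioi, ← integral_indicator measurableSet_Ioi,
    ← integral_add_right_eq_self (fun s => (Ioi h).indicator f s) h]
  congr 1
  funext t
  by_cases ht : t ∈ Ioi (0:ℝ)
  · have ht' : t + h ∈ Ioi h := by simp only [mem_Ioi] at *; linarith
    rw [indicator_of_mem ht' f, indicator_of_mem ht]
  · have ht' : t + h ∉ Ioi h := by simp only [mem_Ioi] at *; linarith
    rw [indicator_of_notMem ht' f, indicator_of_notMem ht]

theorem lap_genpoint (hd : SG T0 M ω) (hμ : ω < μ) (x : X) :
    IsGenPoint T0 (lap T0 μ x) ((μ:ℂ) • lap T0 μ x - x) := by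
  set f : ℝ → X := fun t => Real.exp (-(μ * t)) • T0 t x with hf
  have hfint : IntegrableOn f (Ioi (0:ℝ)) := integrable0 hd hμ x
  have hfcont : ContinuousOn f (Ici (0:ℝ)) := by
    have := cont_integrand hd hμ x (le_refl (0:ℝ))
    simpa [hf] using this
  have hfzero : f 0 = x := by simp [hf, hd.h0]
  set I : ℝ → X := fun h => ∫ t in Ioc (0:ℝ) h, f t with hI
  set J : ℝ → X := fun h => ∫ t in Ioi h, f t with hJ
  -- the shift identity
  have hshift : ∀ h : ℝ, 0 ≤ h → T0 h (lap T0 μ x) = Real.exp (μ * h) • J h := by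
    intro h hh
    rw [pull hd hμ x hh]
    have key : ∀ t : ℝ, Real.exp (-(μ * t)) • T0 (h + t) x
        = Real.exp (μ * h) • f (t + h) := by
      intro t
      rw [hf]
      simp only [smul_smul]
      rw [← Real.exp_add]
      congr 2
      · ring
      · rw [add_comm]
    calc (∫ t in Ioi (0:ℝ), Real.exp (-(μ * t)) • T0 (h + t) x)
        = ∫ t in Ioi (0:ℝ), Real.exp (μ * h) • f (t + h) := by
          exact setIntegral_congr_fun measurableSet_Ioi (fun t _ => key t)
      _ = Real.exp (μ * h) • ∫ t in Ioi (0:ℝ), f (t + h) := by rw [integral_smul]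
      _ = Real.exp (μ * h) • J h := by
          congr 1
          exact shift_integral f h
  -- the splitting identity
  have hsplit : ∀ h : ℝ, 0 < h → lap T0 μ x = I h + J h := by
    intro h hh
    have h1 : IntegrableOn f (Ioc (0:ℝ) h) := hfint.mono_set Ioc_subset_Ioi_self
    have h2 : IntegrableOn f (Ioi h) := hfint.mono_set (Ioi_subset_Ioi (le_of_lt hh))
    rw [lap, hI, hJ, ← setIntegral_union (Ioc_disjoint_Ioi le_rfl) measurableSet_Ioi h1 h2,
      Ioc_union_Ioi_eq_Ioi (le_of_lt hh)]
  -- I h tends to 0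
  have hItendsto : Tendsto I (𝓝[>] (0:ℝ)) (𝓝 0) := by
    set K : ℝ := Real.exp |μ| * (M * Real.exp |ω| * ‖x‖) with hK
    have hK0 : 0 ≤ K := by
      have := le_of_lt hd.hM
      positivity
    have hbound : ∀ h : ℝ, h ∈ Ioc (0:ℝ) 1 → ‖I h‖ ≤ K * h := by
      intro h hh
      have hnorm : ∀ t ∈ Ioc (0:ℝ) h, ‖f t‖ ≤ K := by
        intro t ht
        have ht0 : 0 < t := ht.1
        have ht1 : t ≤ 1 := le_trans ht.2 hh.2
        rw [hf]
        rw [norm_smul, Real.norm_eq_abs, abs_of_pos (Real.exp_pos _)]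
        have h1 : ‖T0 t x‖ ≤ M * Real.exp (ω * t) * ‖x‖ := by
          calc ‖T0 t x‖ ≤ ‖T0 t‖ * ‖x‖ := (T0 t).le_opNorm x
            _ ≤ M * Real.exp (ω * t) * ‖x‖ := by gcongr; exact hd.hbdd t (le_of_lt ht0)
        have h2 : Real.exp (-(μ * t)) ≤ Real.exp |μ| :=
          Real.exp_le_exp.2 (by
            calc -(μ * t) ≤ |μ * t| := neg_le_abs _
              _ = |μ| * |t| := abs_mul μ t
              _ ≤ |μ| * 1 := by gcongr; rw [abs_of_pos ht0]; exact ht1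
              _ = |μ| := mul_one _)
        have h3 : Real.exp (ω * t) ≤ Real.exp |ω| :=
          Real.exp_le_exp.2 (by
            calc ω * t ≤ |ω * t| := le_abs_self _
              _ = |ω| * |t| := abs_mul ω t
              _ ≤ |ω| * 1 := by gcongr; rw [abs_of_pos ht0]; exact ht1
              _ = |ω| := mul_one _)
        calc Real.exp (-(μ * t)) * ‖T0 t x‖
            ≤ Real.exp |μ| * (M * Real.exp (ω * t) * ‖x‖) := by gcongr
          _ ≤ Real.exp |μ| * (M * Real.exp |ω| * ‖x‖) := by
              gcongr
              exact le_of_lt hd.hM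
          _ = K := hK.symm
      have hmeas : AEStronglyMeasurable f (volume.restrict (Ioc (0:ℝ) h)) :=
        ((hfcont.mono (Ioc_subset_Icc_self.trans Icc_subset_Ici_self)).aestronglyMeasurable
          measurableSet_Ioc)
      have := norm_setIntegral_le_of_norm_le_const (C := K)
        (by rw [Real.volume_Ioc]; exact ENNReal.ofReal_lt_top) hnorm (μ := volume)
      rw [measureReal_def, Real.volume_Ioc] at this
      calc ‖I h‖ ≤ K * (ENNReal.ofReal (h - 0)).toReal := this
        _ = K * h := by rw [sub_zero, ENNReal.toReal_ofReal (le_of_lt hh.1)]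
    have hlim : Tendsto (fun h : ℝ => K * h) (𝓝[>] (0:ℝ)) (𝓝 0) := by
      have : Tendsto (fun h : ℝ => K * h) (𝓝 (0:ℝ)) (𝓝 (K * 0)) :=
        (continuous_const.mul continuous_id).tendsto 0
      rw [mul_zero] at this
      exact this.mono_left nhdsWithin_le_nhds
    refine squeeze_zero_norm' ?_ hlim
    filter_upwards [Ioc_mem_nhdsGT_of_mem (by constructor <;> norm_num :
      (0:ℝ) ∈ Ico (0:ℝ) 1)] with h hh
    exact hbound h hh
  -- h⁻¹ • I h tends to x
  have hIx : Tendsto (fun h : ℝ => (h : ℝ)⁻¹ • I h) (𝓝[>] (0:ℝ)) (𝓝 x) := by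
    rw [Metric.tendsto_nhdsWithin_nhds]
    intro ε hε
    have hcw : ContinuousWithinAt f (Ici (0:ℝ)) 0 := hfcont 0 self_mem_Ici
    rw [Metric.continuousWithinAt_iff] at hcw
    obtain ⟨δ, hδ, hδ'⟩ := hcw (ε / 2) (by linarith)
    refine ⟨δ, hδ, fun h hh hdist => ?_⟩
    have hh0 : 0 < h := hh
    have hfInt : IntegrableOn f (Ioc (0:ℝ) h) := hfint.mono_set Ioc_subset_Ioi_self
    have hsub : ∀ t ∈ Ioc (0:ℝ) h, ‖f t - x‖ ≤ ε / 2 := by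
      intro t ht
      have ht0 : 0 < t := ht.1
      have htδ : dist t 0 < δ := by
        rw [Real.dist_eq, sub_zero, abs_of_pos ht0]
        calc t ≤ h := ht.2
          _ < δ := by rwa [Real.dist_eq, sub_zero, abs_of_pos hh0] at hdist
      have := hδ' (mem_Ici.2 (le_of_lt ht0)) htδ
      rw [hfzero] at this
      rw [← dist_eq_norm]
      exact le_of_lt this
    have hIsub : I h - h • x = ∫ t in Ioc (0:ℝ) h, (f t - x) := by
      rw [hI, integral_sub hfInt (integrableOn_const (by
        rw [Real.volume_Ioc]; exact ENNReal.ofReal_ne_top))]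
      congr 1
      rw [setIntegral_const, measureReal_def, Real.volume_Ioc, sub_zero,
        ENNReal.toReal_ofReal (le_of_lt hh0)]
    have hbnd : ‖I h - h • x‖ ≤ ε / 2 * h := by
      rw [hIsub]
      have hmeas : AEStronglyMeasurable (fun t => f t - x) (volume.restrict (Ioc (0:ℝ) h)) :=
        (((hfcont.mono (Ioc_subset_Icc_self.trans Icc_subset_Ici_self)).aestronglyMeasurable
          measurableSet_Ioc).sub aestronglyMeasurable_const)
      have := norm_setIntegral_le_of_norm_le_const (C := ε / 2)
        (by rw [Real.volume_Ioc]; exact ENNReal.ofReal_lt_top) hsub (μ := volume)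
      rw [measureReal_def, Real.volume_Ioc, sub_zero, ENNReal.toReal_ofReal (le_of_lt hh0)] at this
      exact this
    rw [dist_eq_norm]
    have heq : (h : ℝ)⁻¹ • I h - x = (h : ℝ)⁻¹ • (I h - h • x) := by
      rw [smul_sub, smul_smul, inv_mul_cancel₀ (ne_of_gt hh0), one_smul]
    rw [heq, norm_smul, Real.norm_eq_abs, abs_of_pos (inv_pos.2 hh0)]
    calc h⁻¹ * ‖I h - h • x‖ ≤ h⁻¹ * (ε / 2 * h) := by gcongr
      _ = ε / 2 * (h⁻¹ * h) := by ring
      _ = ε / 2 := by rw [inv_mul_cancel₀ (ne_of_gt hh0), mul_one]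
      _ < ε := by linarith
  -- J h tends to lap x
  have hJtendsto : Tendsto J (𝓝[>] (0:ℝ)) (𝓝 (lap T0 μ x)) := by
    have h1 : Tendsto (fun h : ℝ => lap T0 μ x - I h) (𝓝[>] (0:ℝ)) (𝓝 (lap T0 μ x - 0)) :=
      tendsto_const_nhds.sub hItendsto
    rw [sub_zero] at h1
    refine h1.congr' ?_
    filter_upwards [self_mem_nhdsWithin] with h hh
    rw [hsplit h hh]
    abel
  -- slope of exponential
  have hA1 : Tendsto (fun h : ℝ => h⁻¹ * (Real.exp (μ * h) - 1)) (𝓝[>] (0:ℝ)) (𝓝 μ) := by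
    have hD : HasDerivAt (fun h : ℝ => Real.exp (μ * h)) μ 0 := by
      have h1 : HasDerivAt (fun h : ℝ => μ * h) μ 0 := by
        simpa using (hasDerivAt_id (0:ℝ)).const_mul μ
      have := (Real.hasDerivAt_exp (μ * 0)).comp 0 h1
      simpa [Function.comp_def] using this
    have h2 := hasDerivAt_iff_tendsto_slope.mp hD
    have h3 := h2.mono_left (nhdsWithin_mono _ (fun y (hy : y ∈ Ioi (0:ℝ)) =>
      (ne_of_gt hy : y ≠ 0)))
    refine h3.congr (fun h => ?_)
    rw [slope_def_field]
    simp [div_eq_inv_mul]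
  -- put it all together
  have main : Tendsto (fun h : ℝ => (h⁻¹ * (Real.exp (μ * h) - 1)) • J h - h⁻¹ • I h)
      (𝓝[>] (0:ℝ)) (𝓝 (μ • lap T0 μ x - x)) :=
    (hA1.smul hJtendsto).sub hIx
  have hgoal : (μ : ℂ) • lap T0 μ x - x = μ • lap T0 μ x - x := by
    rw [Complex.coe_smul]
  rw [IsGenPoint, hgoal]
  refine main.congr' ?_
  filter_upwards [self_mem_nhdsWithin] with h hh
  have hh0 : 0 < h := hh
  have e1 : (h : ℂ)⁻¹ • (T0 h (lap T0 μ x) - lap T0 μ x)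
      = (h : ℝ)⁻¹ • (T0 h (lap T0 μ x) - lap T0 μ x) := by
    rw [← Complex.ofReal_inv, Complex.coe_smul]
  rw [eq_comm, e1, hshift h (le_of_lt hh0), hsplit h hh0]
  have e2 : Real.exp (μ * h) • J h - (I h + J h) = (Real.exp (μ * h) - 1) • J h - I h := by
    rw [sub_smul, one_smul]
    abel
  rw [e2, smul_sub, smul_smul]

end SgAux4

namespace SgAux5
open SgAux SgAux2

variable {X : Type*} [NormedAddCommGroup X] [NormedSpace ℂ X] [CompleteSpace X]
variable {T0 : ℝ → X →L[ℂ] X} {M ω μ : ℝ}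

theorem lap_eq_of_genpoint (hd : SG T0 M ω) (hμ : ω < μ) {x y : X}
    (hxy : IsGenPoint T0 x y) : lap T0 μ ((μ : ℂ) • x - y) = x := by
  set ft : ℝ → X := fun t => T0 (max t 0) x with hft
  set gt : ℝ → X := fun t => T0 (max t 0) y with hgt
  have hmax : ∀ t : ℝ, max t 0 ∈ Ici (0:ℝ) := fun t => mem_Ici.2 (le_max_right _ _)
  have hftc : Continuous ft :=
    (hd.hcont x).comp_continuous (continuous_id.max continuous_const) hmax
  have hgtc : Continuous gt :=
    (hd.hcont y).comp_continuous (continuous_id.max continuous_const) hmax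
  have hft0 : ft 0 = x := by simp [hft, hd.h0]
  -- the real-scalar version of the generator-point hypothesis
  have hxy' : Tendsto (fun h : ℝ => (h : ℝ)⁻¹ • (T0 h x - x)) (𝓝[>] (0:ℝ)) (𝓝 y) := by
    refine hxy.congr (fun h => ?_)
    rw [← Complex.ofReal_inv, Complex.coe_smul]
  -- right derivative of ft at every t ≥ 0 is gt t
  have hrderiv : ∀ t : ℝ, 0 ≤ t → HasDerivWithinAt ft (gt t) (Ici t) t := by
    intro t ht
    rw [hasDerivWithinAt_iff_tendsto_slope]
    have hIci : Ici t \ {t} = Ioi t := Ici_sdiff_left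
    rw [hIci]
    have hmap : Tendsto (fun u : ℝ => u - t) (𝓝[Ioi t] t) (𝓝[Ioi 0] (0:ℝ)) := by
      apply tendsto_nhdsWithin_of_tendsto_nhds_of_eventually_within
      · have : Tendsto (fun u : ℝ => u - t) (𝓝 t) (𝓝 (t - t)) :=
          ((continuous_id.sub continuous_const).tendsto t)
        rw [sub_self] at this
        exact this.mono_left nhdsWithin_le_nhds
      · filter_upwards [self_mem_nhdsWithin] with u hu
        simp only [mem_Ioi] at *
        linarith
    have hcomp := (((T0 (max t 0)).continuous.tendsto y).comp (hxy'.comp hmap))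
    refine hcomp.congr' ?_
    filter_upwards [self_mem_nhdsWithin] with u hu
    have hut : t < u := hu
    have hu0 : 0 ≤ u := le_trans ht (le_of_lt hut)
    have hsplit : T0 u x = T0 t (T0 (u - t) x) := by
      have := hd.hadd t (u - t) ht (by linarith)
      rw [show t + (u - t) = u by ring] at this
      rw [this]
      rfl
    simp only [Function.comp]
    rw [slope_def_module]
    rw [hft]
    simp only [max_eq_left hu0, max_eq_left ht]
    rw [hsplit, ← map_sub, ← (T0 t).map_smul_of_tower]
  -- the primitive of gt
  set G : ℝ → X := fun t => x + ∫ s in (0:ℝ)..t, gt s with hG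
  have hGD : ∀ t : ℝ, HasDerivAt G (gt t) t := by
    intro t
    have h1 : HasDerivAt (fun u : ℝ => ∫ s in (0:ℝ)..u, gt s) (gt t) t :=
      intervalIntegral.integral_hasDerivAt_right (hgtc.intervalIntegrable 0 t)
        hgtc.stronglyMeasurable.stronglyMeasurableAtFilter hgtc.continuousAt
    simpa [hG] using h1.const_add x
  -- ft equals its primitive representation on [0, ∞)
  have heq : ∀ t : ℝ, 0 ≤ t → ft t = G t := by
    intro t ht
    rcases eq_or_lt_of_le ht with h | h
    · rw [← h, hft0, hG]
      simp
    · have := eq_of_has_deriv_right_eq (a := 0) (b := t)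
        (f' := gt) (f := ft) (g := G)
        (fun s hs => hrderiv s hs.1)
        (fun s _ => (hGD s).hasDerivWithinAt)
        (hftc.continuousOn) (fun s (hs : s ∈ Icc (0:ℝ) t) => (hGD s).continuousAt.continuousWithinAt)
        (by rw [hft0, hG]; simp)
      exact this t (mem_Icc.2 ⟨ht, le_rfl⟩)
  -- genuine derivative of ft for t > 0
  have hfD : ∀ t : ℝ, t ∈ Ioi (0:ℝ) → HasDerivAt ft (gt t) t := by
    intro t ht
    have hev : G =ᶠ[𝓝 t] ft := by
      filter_upwards [Ioi_mem_nhds (show (0:ℝ) < t from ht)] with u hu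
      exact (heq u (le_of_lt hu)).symm
    exact (hGD t).congr_of_eventuallyEq hev.symm
  -- derivative of φ
  set φ : ℝ → X := fun t => (-Real.exp (-(μ * t))) • ft t with hφ
  set ψ : ℝ → X := fun t => Real.exp (-(μ * t)) • ((μ : ℂ) • ft t - gt t) with hψ
  have hφD : ∀ t : ℝ, t ∈ Ioi (0:ℝ) → HasDerivAt φ (ψ t) t := by
    intro t ht
    have hc : HasDerivAt (fun t : ℝ => -Real.exp (-(μ * t))) (μ * Real.exp (-(μ * t))) t := by
      have h1 : HasDerivAt (fun t : ℝ => -(μ * t)) (-μ) t := by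
        simpa using ((hasDerivAt_id t).const_mul μ).fun_neg
      have h2 := (Real.hasDerivAt_exp (-(μ * t))).comp t h1
      have h3 := (h2.fun_neg : HasDerivAt (fun t => -Real.exp (-(μ * t))) _ t)
      refine h3.congr_deriv ?_
      simp [Function.comp]
      ring
    have := hc.fun_smul (hfD t ht)
    convert this using 1
    rw [hψ]
    simp only [Complex.coe_smul]
    module
  -- integrability of ψ on (0, ∞)
  have hψint : IntegrableOn ψ (Ioi (0:ℝ)) := by
    have h1 : IntegrableOn (fun t : ℝ => Real.exp (-(μ * t)) • T0 t ((μ : ℂ) • x - y))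
        (Ioi (0:ℝ)) := integrable0 hd hμ _
    refine h1.congr_fun (fun t ht => ?_) measurableSet_Ioi
    have ht0 : 0 ≤ t := le_of_lt ht
    rw [hψ, hft, hgt]
    simp only [max_eq_left ht0]
    rw [map_sub, (T0 t).map_smul]
  -- φ tends to 0 at infinity
  have hφtop : Tendsto φ atTop (𝓝 0) := by
    have hbound : ∀ t : ℝ, 0 ≤ t → ‖φ t‖ ≤ (M * ‖x‖) * Real.exp ((ω - μ) * t) := by
      intro t ht
      rw [hφ, norm_smul, Real.norm_eq_abs, abs_neg, abs_of_pos (Real.exp_pos _)]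
      have h1 : ‖ft t‖ ≤ M * Real.exp (ω * t) * ‖x‖ := by
        rw [hft]
        simp only [max_eq_left ht]
        calc ‖T0 t x‖ ≤ ‖T0 t‖ * ‖x‖ := (T0 t).le_opNorm x
          _ ≤ M * Real.exp (ω * t) * ‖x‖ := by gcongr; exact hd.hbdd t ht
      have hkey : Real.exp (-(μ * t)) * Real.exp (ω * t) = Real.exp ((ω - μ) * t) := by
        rw [← Real.exp_add]; ring_nf
      calc Real.exp (-(μ * t)) * ‖ft t‖
          ≤ Real.exp (-(μ * t)) * (M * Real.exp (ω * t) * ‖x‖) := by gcongr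
        _ = (Real.exp (-(μ * t)) * Real.exp (ω * t)) * (M * ‖x‖) := by ring
        _ = (M * ‖x‖) * Real.exp ((ω - μ) * t) := by rw [hkey]; ring
    have hlim : Tendsto (fun t : ℝ => (M * ‖x‖) * Real.exp ((ω - μ) * t)) atTop (𝓝 0) := by
      have h1 : Tendsto (fun t : ℝ => (ω - μ) * t) atTop atBot := by
        apply tendsto_neg_atTop_atBot.comp
          ((tendsto_const_mul_atTop_of_pos (show (0:ℝ) < μ - ω by linarith)).2 tendsto_id)
          |>.congr
        intro t
        simp
        ring
      simpa using (Real.tendsto_exp_atBot.comp h1).const_mul (M * ‖x‖)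
    refine squeeze_zero_norm' ?_ hlim
    filter_upwards [Ici_mem_atTop (0:ℝ)] with t ht
    exact hbound t ht
  -- continuity of φ at 0 from the right
  have hφcont : ContinuousWithinAt φ (Ici (0:ℝ)) 0 :=
    (Continuous.continuousWithinAt (by fun_prop))
  -- FTC on (0, ∞)
  have hFTC := integral_Ioi_of_hasDerivAt_of_tendsto hφcont hφD hψint hφtop
  have hφ0 : φ 0 = -x := by
    rw [hφ]
    simp [hft0]
  rw [hφ0] at hFTC
  -- conclude
  have : lap T0 μ ((μ : ℂ) • x - y) = ∫ t in Ioi (0:ℝ), ψ t := by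
    rw [lap]
    refine setIntegral_congr_fun measurableSet_Ioi (fun t ht => ?_)
    have ht0 : (0:ℝ) ≤ t := le_of_lt ht
    rw [hψ, hft, hgt]
    simp only [max_eq_left ht0]
    rw [map_sub, (T0 t).map_smul]
  rw [this, hFTC]
  simp

end SgAux5


/-- If `T_z` are `C₀`-semigroups with uniform bound `‖T_z(t)‖ ≤ M e^{ωt}` and
`z ↦ (λ − A_z)⁻¹` is holomorphic on `Ω` for one `λ > ω`, then for every `μ > ω`
the resolvents `(μ − A_z)⁻¹` exist, `z ↦ (μ − A_z)⁻¹` is holomorphic on `Ω`,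
and `‖(μ − A_z)^{−n}‖ ≤ M/(μ − ω)ⁿ` for all `n`. The resolvent `(μ − A_z)⁻¹`
is characterized by its action on the graph of the generator `A_z`. -/
theorem resolvents_holomorphic_and_bounded
    (X : Type*) [NormedAddCommGroup X] [NormedSpace ℂ X] [CompleteSpace X]
    (Ω : Set ℂ) (hΩ : IsOpen Ω)
    (T : ℂ → ℝ → X →L[ℂ] X) (M ω : ℝ) (hM : 0 < M)
    (hT0 : ∀ z ∈ Ω, T z 0 = 1)
    (hTadd : ∀ z ∈ Ω, ∀ s t : ℝ, 0 ≤ s → 0 ≤ t →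
      T z (s + t) = (T z s).comp (T z t))
    (hTcont : ∀ z ∈ Ω, ∀ x : X, ContinuousOn (fun t : ℝ => T z t x) (Set.Ici 0))
    (hTbound : ∀ z ∈ Ω, ∀ t : ℝ, 0 ≤ t → ‖T z t‖ ≤ M * Real.exp (ω * t))
    (lam : ℝ) (hlam : ω < lam) (R : ℂ → X →L[ℂ] X)
    (hR : ∀ z ∈ Ω, ∀ x : X, IsGenPoint (T z) (R z x) ((lam : ℂ) • R z x - x))
    (hR' : ∀ z ∈ Ω, ∀ x y : X, IsGenPoint (T z) x y → R z ((lam : ℂ) • x - y) = x)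
    (hRholo : DifferentiableOn ℂ R Ω) :
    ∀ μ : ℝ, ω < μ → ∃ Rμ : ℂ → X →L[ℂ] X,
      DifferentiableOn ℂ Rμ Ω ∧
      ∀ z ∈ Ω,
        (∀ x : X, IsGenPoint (T z) (Rμ z x) ((μ : ℂ) • Rμ z x - x)) ∧
        (∀ x y : X, IsGenPoint (T z) x y → Rμ z ((μ : ℂ) • x - y) = x) ∧
        (∀ n : ℕ, ‖(Rμ z) ^ n‖ ≤ M / (μ - ω) ^ n) := by

  intro μ hμ2
  have hd : ∀ z, z ∈ Ω → SgAux.SG (T z) M ω := fun z hz =>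
    ⟨hM, hT0 z hz, hTadd z hz, hTcont z hz, hTbound z hz⟩
  set c : ℂ := (μ : ℂ) - (lam : ℂ) with hc
  set S : ℂ → X →L[ℂ] X := fun z => 1 + c • R z with hS
  have key : ∀ z (hz : z ∈ Ω), IsUnit (S z) ∧
      Ring.inverse (S z) * R z = SgAux3.lapL (hd z hz) hμ2 := by
    intro z hz
    set Gz : X →L[ℂ] X := SgAux3.lapL (hd z hz) hμ2 with hGz
    have hGapp : ∀ w : X, Gz w = SgAux2.lap (T z) μ w := fun w => rfl
    -- first resolvent identity
    have hi : ∀ w : X, c • R z (Gz w) = R z w - Gz w := by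
      intro w
      have hgen : IsGenPoint (T z) (Gz w) ((μ : ℂ) • Gz w - w) := by
        rw [hGapp]
        exact SgAux4.lap_genpoint (hd z hz) hμ2 w
      have h1 := hR' z hz (Gz w) ((μ : ℂ) • Gz w - w) hgen
      have h2 : (lam : ℂ) • Gz w - ((μ : ℂ) • Gz w - w) = ((lam : ℂ) - (μ : ℂ)) • Gz w + w := by
        module
      rw [h2, map_add, (R z).map_smul] at h1
      have h3 : ((lam : ℂ) - (μ : ℂ)) = -c := by rw [hc]; ring
      rw [h3, neg_smul] at h1
      set A : X := R z (Gz w) with hA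
      rw [← h1]
      abel
    -- second resolvent identity
    have hii : ∀ w : X, c • Gz (R z w) = R z w - Gz w := by
      intro w
      have h1 := SgAux5.lap_eq_of_genpoint (hd z hz) hμ2 (hR z hz w)
      have h2 : (μ : ℂ) • R z w - ((lam : ℂ) • R z w - w) = c • R z w + w := by
        rw [hc]; module
      rw [h2] at h1
      have h3 : Gz (c • R z w + w) = R z w := h1
      rw [map_add, Gz.map_smul] at h3
      rw [eq_sub_iff_add_eq]
      exact h3
    set V : X →L[ℂ] X := 1 - c • Gz with hV
    have hSV : S z * V = 1 := by
      ext w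
      simp only [hS, hV, ContinuousLinearMap.mul_apply, ContinuousLinearMap.add_apply,
        ContinuousLinearMap.sub_apply, ContinuousLinearMap.smul_apply,
        ContinuousLinearMap.one_apply, ContinuousLinearMap.coe_smul', Pi.smul_apply]
      rw [map_sub, (R z).map_smul, hi w]
      module
    have hVS : V * S z = 1 := by
      ext w
      simp only [hS, hV, ContinuousLinearMap.mul_apply, ContinuousLinearMap.add_apply,
        ContinuousLinearMap.sub_apply, ContinuousLinearMap.smul_apply,
        ContinuousLinearMap.one_apply, ContinuousLinearMap.coe_smul', Pi.smul_apply]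
      rw [map_add, Gz.map_smul, hii w]
      module
    have hu : IsUnit (S z) := ⟨⟨S z, V, hSV, hVS⟩, rfl⟩
    refine ⟨hu, ?_⟩
    have hinv : Ring.inverse (S z) = V := Ring.inverse_unit ⟨S z, V, hSV, hVS⟩
    rw [hinv]
    ext w
    simp only [hV, ContinuousLinearMap.mul_apply, ContinuousLinearMap.sub_apply,
      ContinuousLinearMap.smul_apply, ContinuousLinearMap.one_apply,
      ContinuousLinearMap.coe_smul', Pi.smul_apply]
    rw [hii w]
    abel
  refine ⟨fun z => Ring.inverse (S z) * R z, ?_, ?_⟩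
  · intro z hz
    have hSdiff : DifferentiableWithinAt ℂ S Ω z := by
      rw [hS]
      exact (differentiableWithinAt_const _).add ((hRholo z hz).const_smul c)
    have hinv : DifferentiableWithinAt ℂ (fun z => Ring.inverse (S z)) Ω z :=
      (differentiableAt_inverse (key z hz).1).comp_differentiableWithinAt z hSdiff
    exact hinv.mul (hRholo z hz)
  · intro z hz
    obtain ⟨hu, heq⟩ := key z hz
    simp only [heq]
    refine ⟨fun x => ?_, fun x y hxy => ?_, fun n => ?_⟩
    · exact SgAux4.lap_genpoint (hd z hz) hμ2 x
    · exact SgAux5.lap_eq_of_genpoint (hd z hz) hμ2 hxy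
    · exact SgAux3.lapL_pow_norm (hd z hz) hμ2 n
end

section
/- Let A be the generator of a C₀-semigroup T on a Banach space X with ‖T(t)‖ ≤ M for all t ≥ 0. Then for every x ∈ X and every t₁ > 0, the convergence (I − (t/n)A)^{−n} x → T(t)x as n → ∞ is uniform for t ∈ [0, t₁]. -/
open Filter

open MeasureTheory Set Real

set_option linter.unusedSectionVars false
set_option maxHeartbeats 1000000

noncomputable def gam (k : ℕ) (τ : ℝ) : ℝ := τ ^ k * Real.exp (-τ) / (k.factorial : ℝ)

lemma gam_nonneg (k : ℕ) {τ : ℝ} (hτ : 0 ≤ τ) : 0 ≤ gam k τ := by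
  unfold gam; positivity

lemma gam_cont (k : ℕ) : Continuous (gam k) := by
  unfold gam; fun_prop

lemma integrableOn_pow_mul_exp_neg (k : ℕ) :
    IntegrableOn (fun τ : ℝ => τ ^ k * Real.exp (-τ)) (Ioi (0:ℝ)) := by
  have h := Real.GammaIntegral_convergent (s := (k:ℝ)+1) (by positivity)
  have h1 : ((k:ℝ)) + 1 - 1 = (k:ℝ) := by ring
  rw [h1] at h
  refine (h.congr_fun ?_ measurableSet_Ioi)
  intro x hx
  simp only [Real.rpow_natCast]; ring

lemma integral_pow_mul_exp_neg (k : ℕ) :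
    ∫ τ in Ioi (0:ℝ), τ ^ k * Real.exp (-τ) = (k.factorial : ℝ) := by
  have h := (Real.Gamma_eq_integral (s := (k:ℝ)+1) (by positivity)).symm
  have h1 : ((k:ℝ)) + 1 - 1 = (k:ℝ) := by ring
  rw [h1] at h
  rw [Real.Gamma_nat_eq_factorial] at h
  rw [← h]
  refine setIntegral_congr_fun measurableSet_Ioi ?_
  intro x hx
  simp only [Real.rpow_natCast]; ring

lemma integrableOn_gam (k : ℕ) : IntegrableOn (gam k) (Ioi (0:ℝ)) := by
  unfold gam
  simp only [div_eq_mul_inv]; exact (integrableOn_pow_mul_exp_neg k).mul_const ((k.factorial : ℝ))⁻¹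

lemma integrableOn_pow_mul_gam (m k : ℕ) :
    IntegrableOn (fun τ : ℝ => τ ^ m * gam k τ) (Ioi (0:ℝ)) := by
  unfold gam
  have := (integrableOn_pow_mul_exp_neg (m + k)).mul_const ((k.factorial : ℝ))⁻¹
  refine IntegrableOn.congr_fun this ?_ measurableSet_Ioi
  intro x hx
  simp only [pow_add, div_eq_mul_inv]; ring

lemma integral_pow_mul_gam (m k : ℕ) :
    ∫ τ in Ioi (0:ℝ), τ ^ m * gam k τ = ((m+k).factorial : ℝ) / (k.factorial : ℝ) := by
  unfold gam
  have : ∀ x ∈ Ioi (0:ℝ), x ^ m * (x ^ k * Real.exp (-x) / (k.factorial : ℝ))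
      = (x ^ (m+k) * Real.exp (-x)) * ((k.factorial : ℝ))⁻¹ := by
    intro x hx; rw [pow_add]; ring
  rw [setIntegral_congr_fun measurableSet_Ioi this, integral_mul_const,
    integral_pow_mul_exp_neg, div_eq_mul_inv]

lemma integral_gam (k : ℕ) : ∫ τ in Ioi (0:ℝ), gam k τ = 1 := by
  have h := integral_pow_mul_gam 0 k
  have hfac : ((k.factorial : ℝ)) ≠ 0 := by positivity
  simp only [pow_zero, one_mul, Nat.zero_add] at h
  rw [h, div_self hfac]

-- variance computation
lemma integrableOn_sq_sub_mul_gam (n : ℕ) (c : ℝ) :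
    IntegrableOn (fun τ : ℝ => (τ - c) ^ 2 * gam n τ) (Ioi (0:ℝ)) := by
  have h2 := integrableOn_pow_mul_gam 2 n
  have h1 := (integrableOn_pow_mul_gam 1 n).const_mul (2*c)
  have h0 := (integrableOn_pow_mul_gam 0 n).const_mul (c^2)
  have h : IntegrableOn (fun x : ℝ => x^2*gam n x - 2*c*(x^1*gam n x) + c^2*(x^0*gam n x)) (Ioi (0:ℝ)) := (h2.sub h1).add h0
  refine h.congr_fun ?_ measurableSet_Ioi
  intro x hx; simp; ring

lemma integral_gam_var (n : ℕ) :
    ∫ τ in Ioi (0:ℝ), (τ - (n+1)) ^ 2 * gam n τ = (n+1 : ℝ) := by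
  have h2 := integrableOn_pow_mul_gam 2 n
  have h1 : IntegrableOn (fun x : ℝ => 2*((n:ℝ)+1)*(x^1*gam n x)) (Ioi (0:ℝ)) := (integrableOn_pow_mul_gam 1 n).const_mul (2*((n:ℝ)+1))
  have h0 : IntegrableOn (fun x : ℝ => ((n:ℝ)+1)^2*(x^0*gam n x)) (Ioi (0:ℝ)) := (integrableOn_pow_mul_gam 0 n).const_mul (((n:ℝ)+1)^2)
  have hsub : IntegrableOn (fun x : ℝ => x^2*gam n x - 2*((n:ℝ)+1)*(x^1*gam n x)) (Ioi (0:ℝ)) := h2.sub h1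
  have key : ∀ x ∈ Ioi (0:ℝ), (x - ((n:ℝ)+1)) ^ 2 * gam n x
      = (x^2 * gam n x - 2*((n:ℝ)+1) * (x^1 * gam n x)) + ((n:ℝ)+1)^2 * (x^0 * gam n x) := by
    intro x hx; simp; ring
  rw [setIntegral_congr_fun measurableSet_Ioi key, integral_add hsub h0,
    integral_sub h2 h1, MeasureTheory.integral_const_mul, MeasureTheory.integral_const_mul,
    integral_pow_mul_gam, integral_pow_mul_gam, integral_pow_mul_gam]
  have hfac : ((n.factorial : ℝ)) ≠ 0 := Nat.cast_ne_zero.mpr n.factorial_ne_zero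
  have e2 : ((2+n).factorial : ℝ) = ((n:ℝ)+1)*((n:ℝ)+2) * (n.factorial : ℝ) := by
    rw [show 2+n = (n+1)+1 by ring, Nat.factorial_succ, Nat.factorial_succ]
    push_cast; ring
  have e1 : ((1+n).factorial : ℝ) = ((n:ℝ)+1) * (n.factorial : ℝ) := by
    rw [show 1+n = n+1 by ring, Nat.factorial_succ]; push_cast; ring
  have e0 : ((0+n).factorial : ℝ) = (n.factorial : ℝ) := by norm_num
  rw [e2, e1, e0]
  field_simp
  ring

section Main
variable {X : Type*} [NormedAddCommGroup X] [NormedSpace ℂ X] [CompleteSpace X]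
variable {T : ℝ → X →L[ℂ] X} {M : ℝ}

lemma integrableOn_exp_neg' : IntegrableOn (fun τ : ℝ => Real.exp (-τ)) (Ioi (0:ℝ)) := by
  refine (integrableOn_gam 0).congr_fun ?_ measurableSet_Ioi
  intro x hx
  unfold gam
  simp
lemma asm_aux (hTcont : ∀ x : X, ContinuousOn (fun t : ℝ => T t x) (Set.Ici 0))
    (x : X) {s : ℝ} (hs : 0 ≤ s) {u : ℝ} (hu : 0 ≤ u) :
    AEStronglyMeasurable (fun τ : ℝ => T (u + s * τ) x) (volume.restrict (Ioi 0)) := by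
  refine ContinuousOn.aestronglyMeasurable ?_ measurableSet_Ioi
  refine (hTcont x).comp (by fun_prop) ?_
  intro τ hτ
  exact add_nonneg hu (mul_nonneg hs (le_of_lt hτ))
lemma norm_T_apply_le (hTbound : ∀ t : ℝ, 0 ≤ t → ‖T t‖ ≤ M) (x : X) {u : ℝ} (hu : 0 ≤ u) :
    ‖T u x‖ ≤ M * ‖x‖ :=
  le_trans ((T u).le_opNorm x) (mul_le_mul_of_nonneg_right (hTbound u hu) (norm_nonneg x))
lemma int_aux (hTcont : ∀ x : X, ContinuousOn (fun t : ℝ => T t x) (Set.Ici 0))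
    (hTbound : ∀ t : ℝ, 0 ≤ t → ‖T t‖ ≤ M)
    (x : X) {s : ℝ} (hs : 0 ≤ s) {u : ℝ} (hu : 0 ≤ u)
    {g : ℝ → ℝ} (hg : IntegrableOn g (Ioi 0)) (hgpos : ∀ τ ∈ Ioi (0:ℝ), 0 ≤ g τ) :
    IntegrableOn (fun τ => g τ • T (u + s * τ) x) (Ioi 0) := by
  refine Integrable.mono' (hg.mul_const (M * ‖x‖)) (hg.1.smul (asm_aux hTcont x hs hu)) ?_
  rw [ae_restrict_iff' measurableSet_Ioi]
  filter_upwards with τ hτ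
  rw [norm_smul, Real.norm_eq_abs, abs_of_nonneg (hgpos τ hτ)]
  exact mul_le_mul_of_nonneg_left
    (norm_T_apply_le hTbound x (add_nonneg hu (mul_nonneg hs hτ.le))) (hgpos τ hτ)
lemma T_pull_in (hTadd : ∀ s t : ℝ, 0 ≤ s → 0 ≤ t → T (s + t) = (T s).comp (T t))
    (hTcont : ∀ x : X, ContinuousOn (fun t : ℝ => T t x) (Set.Ici 0))
    (hTbound : ∀ t : ℝ, 0 ≤ t → ‖T t‖ ≤ M)
    (x : X) {s u : ℝ} (hs : 0 ≤ s) (hu : 0 ≤ u)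
    {g : ℝ → ℝ} (hg : IntegrableOn g (Ioi 0)) (hgpos : ∀ τ ∈ Ioi (0:ℝ), 0 ≤ g τ) :
    T u (∫ τ in Ioi 0, g τ • T (s * τ) x) = ∫ τ in Ioi 0, g τ • T (u + s * τ) x := by
  rw [← ContinuousLinearMap.integral_comp_comm _
    (by have h := int_aux hTcont hTbound x hs le_rfl hg hgpos; simp only [zero_add] at h; exact h)]
  refine setIntegral_congr_fun measurableSet_Ioi ?_
  intro τ hτ
  simp only
  rw [(T u).map_smul_of_tower, hTadd u (s*τ) hu (mul_nonneg hs hτ.le)]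
  rfl
lemma shift_Ioi (f : ℝ → X) (a : ℝ) :
    ∫ x in Ioi a, f x = ∫ x in Ioi 0, f (x + a) := by
  rw [← integral_indicator measurableSet_Ioi, ← integral_indicator measurableSet_Ioi,
    ← integral_add_right_eq_self (fun x => (Ioi a).indicator f x) a]
  congr 1
  ext x
  simp only [Set.indicator_apply, Set.mem_Ioi, lt_add_iff_pos_left]
lemma laplace_rep (hT0 : T 0 = 1)
    (hTadd : ∀ s t : ℝ, 0 ≤ s → 0 ≤ t → T (s + t) = (T s).comp (T t))
    (hTcont : ∀ x : X, ContinuousOn (fun t : ℝ => T t x) (Set.Ici 0))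
    (hTbound : ∀ t : ℝ, 0 ≤ t → ‖T t‖ ≤ M)
    {R : ℝ → X →L[ℂ] X}
    (hR' : ∀ s : ℝ, 0 < s → ∀ x y : X, IsGenPoint T x y → R s (x - (s:ℂ) • y) = x)
    {s : ℝ} (hs : 0 < s) (y : X) :
    R s y = ∫ τ in Ioi 0, Real.exp (-τ) • T (s * τ) y := by
  have hM0 : 0 ≤ M := le_trans (norm_nonneg (T 0)) (hTbound 0 le_rfl)
  set h : ℝ → X := fun σ => Real.exp (-σ) • T (s * σ) y with hh
  set J : ℝ → X := fun a => ∫ σ in Ioi a, h σ with hJ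
  have hgpos : ∀ τ ∈ Ioi (0:ℝ), 0 ≤ Real.exp (-τ) := fun τ _ => (Real.exp_pos _).le
  have hint : IntegrableOn h (Ioi 0) := by
    have := int_aux hTcont hTbound y hs.le le_rfl integrableOn_exp_neg' hgpos
    simpa [hh] using this
  have hnorm_h : ∀ σ : ℝ, 0 ≤ σ → ‖h σ‖ ≤ M * ‖y‖ := by
    intro σ hσ
    rw [hh]
    simp only [norm_smul, Real.norm_eq_abs, abs_of_pos (Real.exp_pos _)]
    calc Real.exp (-σ) * ‖T (s*σ) y‖
        ≤ 1 * (M * ‖y‖) := by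
          refine mul_le_mul (Real.exp_le_one_iff.mpr (by linarith)) ?_ (norm_nonneg _) zero_le_one
          exact norm_T_apply_le hTbound y (mul_nonneg hs.le hσ)
      _ = M * ‖y‖ := one_mul _
  -- identity: T t (J 0) = exp (t/s) • J (t/s) for t > 0
  have hTtJ : ∀ t : ℝ, 0 < t → T t (J 0) = Real.exp (t/s) • J (t/s) := by
    intro t ht
    have h1 : T t (J 0) = ∫ τ in Ioi 0, Real.exp (-τ) • T (t + s * τ) y := by
      have := T_pull_in hTadd hTcont hTbound y hs.le ht.le integrableOn_exp_neg' hgpos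
      simpa [hJ, hh] using this
    have h2 : J (t/s) = ∫ τ in Ioi 0, Real.exp (-(τ + t/s)) • T (s * (τ + t/s)) y := by
      rw [hJ]
      simpa [hh] using shift_Ioi h (t/s)
    rw [h1, h2, ← integral_smul]
    refine (setIntegral_congr_fun measurableSet_Ioi ?_).symm
    intro τ hτ
    simp only [smul_smul, ← Real.exp_add]
    congr 2
    · ring
    · field_simp; ring
  -- splitting: J 0 = ∫_{Ioc 0 a} h + J a for a ≥ 0
  have hsplit : ∀ a : ℝ, 0 ≤ a → J 0 = (∫ σ in Ioc 0 a, h σ) + J a := by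
    intro a ha
    have hu : Ioc 0 a ∪ Ioi a = Ioi 0 := Ioc_union_Ioi_eq_Ioi ha
    rw [hJ]
    simp only
    rw [← hu, setIntegral_union (Ioc_disjoint_Ioi le_rfl) measurableSet_Ioi
      (hint.mono_set Ioc_subset_Ioi_self) (hint.mono_set (Ioi_subset_Ioi ha))]
  -- piece (a)
  have ha : Tendsto (fun t : ℝ => (Real.exp (t/s) - 1) / t) (nhdsWithin 0 (Ioi 0)) (nhds s⁻¹) := by
    have hd0 : HasDerivAt (fun t : ℝ => Real.exp (t / s)) s⁻¹ 0 := by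
      have := ((hasDerivAt_id (0:ℝ)).div_const s).exp
      simpa using this
    rw [hasDerivAt_iff_tendsto_slope] at hd0
    have hsub : Ioi (0:ℝ) ⊆ {(0:ℝ)}ᶜ := fun x hx => ne_of_gt hx
    have := hd0.mono_left (nhdsWithin_mono 0 hsub)
    refine this.congr ?_
    intro t
    rw [slope_def_field]
    simp [div_eq_mul_inv]
  -- piece (b)
  have hb : Tendsto (fun t : ℝ => J (t/s)) (nhdsWithin 0 (Ioi 0)) (nhds (J 0)) := by
    rw [← tendsto_sub_nhds_zero_iff]
    have hbound : ∀ t ∈ Ioi (0:ℝ), ‖J (t/s) - J 0‖ ≤ (M * ‖y‖ / s) * t := by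
      intro t ht
      have hts : 0 ≤ t / s := div_nonneg (le_of_lt ht) hs.le
      rw [hsplit (t/s) hts]
      have : ∀ σ ∈ Ioc 0 (t/s), ‖h σ‖ ≤ M * ‖y‖ := fun σ hσ => hnorm_h σ hσ.1.le
      calc ‖J (t/s) - ((∫ σ in Ioc 0 (t/s), h σ) + J (t/s))‖
          = ‖∫ σ in Ioc 0 (t/s), h σ‖ := by rw [← norm_neg]; congr 1; abel
        _ ≤ (M * ‖y‖) * (volume (Ioc 0 (t/s))).toReal := by
            refine norm_setIntegral_le_of_norm_le_const ?_ this
            exact measure_Ioc_lt_top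
        _ = (M * ‖y‖ / s) * t := by
            rw [Real.volume_Ioc]
            rw [ENNReal.toReal_ofReal (by linarith)]
            field_simp
            ring
    have h0 : Tendsto (fun t : ℝ => (M * ‖y‖ / s) * t) (nhdsWithin 0 (Ioi 0)) (nhds 0) := by
      have : Tendsto (fun t : ℝ => (M * ‖y‖ / s) * t) (nhds 0) (nhds 0) := by
        simpa using (continuous_mul_left (M * ‖y‖ / s)).tendsto (0:ℝ)
      exact this.mono_left nhdsWithin_le_nhds
    refine squeeze_zero_norm' ?_ h0
    filter_upwards [self_mem_nhdsWithin] with t ht using hbound t ht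
  -- piece (c)
  have hconth : ContinuousOn h (Ici 0) := by
    refine ContinuousOn.smul (f := fun σ : ℝ => Real.exp (-σ)) ?_ ?_
    · exact (Real.continuous_exp.comp continuous_neg).continuousOn
    · refine (hTcont y).comp (continuous_const.mul continuous_id).continuousOn ?_
      intro σ hσ
      exact mul_nonneg hs.le hσ
  have hh0 : h 0 = y := by rw [hh]; simp [hT0]
  have hc : Tendsto (fun t : ℝ => t⁻¹ • ∫ σ in Ioc 0 (t/s), h σ) (nhdsWithin 0 (Ioi 0))
      (nhds (s⁻¹ • y)) := by
    rw [Metric.tendsto_nhdsWithin_nhds]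
    intro ε hε
    have hcw : ContinuousWithinAt h (Ici 0) 0 := hconth 0 (self_mem_Ici)
    rw [Metric.continuousWithinAt_iff] at hcw
    obtain ⟨δ₀, hδ₀, hδ⟩ := hcw (s * ε / 2) (by positivity)
    refine ⟨s * δ₀, by positivity, ?_⟩
    intro t ht hdist
    have htpos : 0 < t := ht
    have hts : 0 < t / s := div_pos htpos hs
    rw [Real.dist_eq, sub_zero, abs_of_pos htpos] at hdist
    have htsδ : t / s < δ₀ := by
      rw [div_lt_iff₀ hs]
      calc t < s * δ₀ := hdist
        _ = δ₀ * s := mul_comm _ _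
    -- integrability on Ioc
    have hioc : IntegrableOn h (Ioc 0 (t/s)) := hint.mono_set Ioc_subset_Ioi_self
    have hconst : IntegrableOn (fun _ : ℝ => y) (Ioc 0 (t/s)) := by
      exact integrableOn_const measure_Ioc_lt_top.ne
    have key : (∫ σ in Ioc 0 (t/s), h σ) - (t/s) • y = ∫ σ in Ioc 0 (t/s), (h σ - y) := by
      rw [integral_sub hioc hconst, setIntegral_const, Real.volume_real_Ioc_of_le hts.le, sub_zero]
    have hb2 : ‖∫ σ in Ioc 0 (t/s), (h σ - y)‖ ≤ (s * ε / 2) * (t/s) := by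
      have hbnd : ∀ σ ∈ Ioc 0 (t/s), ‖h σ - y‖ ≤ s * ε / 2 := by
        intro σ hσ
        have hσ0 : σ ∈ Ici (0:ℝ) := le_of_lt hσ.1
        have : dist σ 0 < δ₀ := by
          rw [Real.dist_eq, sub_zero, abs_of_pos hσ.1]
          exact lt_of_le_of_lt hσ.2 htsδ
        have := hδ hσ0 this
        rw [hh0] at this
        rw [← dist_eq_norm]
        exact this.le
      calc ‖∫ σ in Ioc 0 (t/s), (h σ - y)‖
          ≤ (s * ε / 2) * (volume (Ioc 0 (t/s))).toReal := by
            refine norm_setIntegral_le_of_norm_le_const measure_Ioc_lt_top hbnd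
        _ = (s * ε / 2) * (t/s) := by
            rw [Real.volume_Ioc, ENNReal.toReal_ofReal (by rw [sub_zero]; exact hts.le : (0:ℝ) ≤ t/s - 0), sub_zero]
    rw [dist_eq_norm]
    have heq : t⁻¹ • (∫ σ in Ioc 0 (t/s), h σ) - s⁻¹ • y
        = t⁻¹ • ∫ σ in Ioc 0 (t/s), (h σ - y) := by
      rw [← key, smul_sub, smul_smul]
      congr 2
      rw [div_eq_mul_inv]
      field_simp
    rw [heq]
    rw [norm_smul, Real.norm_eq_abs, abs_of_pos (inv_pos.mpr htpos)]
    calc t⁻¹ * ‖∫ σ in Ioc 0 (t/s), (h σ - y)‖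
        ≤ t⁻¹ * ((s * ε / 2) * (t/s)) := by
          exact mul_le_mul_of_nonneg_left hb2 (inv_nonneg.mpr htpos.le)
      _ = ε / 2 := by field_simp
      _ < ε := by linarith
  -- combine
  have key : Tendsto (fun t : ℝ => (t:ℝ)⁻¹ • (T t (J 0) - J 0)) (nhdsWithin 0 (Ioi 0))
      (nhds (s⁻¹ • (J 0 - y))) := by
    have hcomb := (ha.smul hb).sub hc
    have htarget : s⁻¹ • J 0 - s⁻¹ • y = s⁻¹ • (J 0 - y) := (smul_sub _ _ _).symm
    rw [htarget] at hcomb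
    refine hcomb.congr' ?_
    filter_upwards [self_mem_nhdsWithin] with t ht
    have htpos : (0:ℝ) < t := ht
    rw [hTtJ t htpos, hsplit (t/s) (div_nonneg htpos.le hs.le)]
    have : Real.exp (t/s) • J (t/s) - ((∫ σ in Ioc 0 (t/s), h σ) + J (t/s))
        = (Real.exp (t/s) - 1) • J (t/s) - ∫ σ in Ioc 0 (t/s), h σ := by
      rw [sub_smul, one_smul]; abel
    rw [this, smul_sub, smul_smul, div_eq_mul_inv, mul_comm]
  -- conclude via hR'
  have hgen : IsGenPoint T (J 0) ((s:ℂ)⁻¹ • (J 0 - y)) := by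
    unfold IsGenPoint
    have hco : ((s:ℂ))⁻¹ • (J 0 - y) = s⁻¹ • (J 0 - y) := by
      rw [← Complex.ofReal_inv, Complex.coe_smul]
    rw [hco]
    refine key.congr ?_
    intro t
    rw [← Complex.ofReal_inv, Complex.coe_smul]
  have hfin := hR' s hs (J 0) ((s:ℂ)⁻¹ • (J 0 - y)) hgen
  have hsne : ((s:ℂ)) ≠ 0 := by
    simp only [ne_eq, Complex.ofReal_eq_zero]
    exact hs.ne'
  rw [smul_inv_smul₀ hsne, sub_sub_cancel] at hfin
  rw [hfin, hJ]
lemma integrableOn_shift {f : ℝ → ℝ} (hf : IntegrableOn f (Ioi 0)) (a : ℝ) :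
    IntegrableOn (fun u => f (u - a)) (Ioi a) := by
  rw [← integrable_indicator_iff measurableSet_Ioi] at hf ⊢
  have he : (Ioi a).indicator (fun u => f (u - a)) = fun u => (Ioi 0).indicator f (u - a) := by
    ext u
    simp only [indicator_apply, mem_Ioi, sub_pos]
  rw [he]
  exact hf.comp_sub_right a

lemma integral_shift_Ioi {E : Type*} [NormedAddCommGroup E] [NormedSpace ℝ E]
    (f : ℝ → E) (a : ℝ) :
    ∫ x in Ioi a, f x = ∫ x in Ioi 0, f (x + a) := by
  rw [← integral_indicator measurableSet_Ioi, ← integral_indicator measurableSet_Ioi,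
    ← integral_add_right_eq_self (fun x => (Ioi a).indicator f x) a]
  congr 1
  ext x
  simp only [Set.indicator_apply, Set.mem_Ioi, lt_add_iff_pos_left]

lemma pow_rep (hT0 : T 0 = 1)
    (hTadd : ∀ s t : ℝ, 0 ≤ s → 0 ≤ t → T (s + t) = (T s).comp (T t))
    (hTcont : ∀ x : X, ContinuousOn (fun t : ℝ => T t x) (Set.Ici 0))
    (hTbound : ∀ t : ℝ, 0 ≤ t → ‖T t‖ ≤ M)
    {R : ℝ → X →L[ℂ] X}
    (hR' : ∀ s : ℝ, 0 < s → ∀ x y : X, IsGenPoint T x y → R s (x - (s:ℂ) • y) = x)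
    {s : ℝ} (hs : 0 < s) (y : X) (n : ℕ) :
    ((R s) ^ (n+1)) y = ∫ τ in Ioi 0, gam n τ • T (s * τ) y := by
  have hM0 : 0 ≤ M := le_trans (norm_nonneg (T 0)) (hTbound 0 le_rfl)
  induction n with
  | zero =>
    rw [pow_one, laplace_rep hT0 hTadd hTcont hTbound hR' hs y]
    refine setIntegral_congr_fun measurableSet_Ioi ?_
    intro τ hτ
    simp [gam]
  | succ n ih =>
    have hgam_pos : ∀ τ ∈ Ioi (0:ℝ), 0 ≤ gam n τ := fun τ hτ => gam_nonneg n hτ.le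
    -- step 1: express as iterated integral
    have h1 : ((R s) ^ (n+2)) y
        = ∫ σ in Ioi 0, Real.exp (-σ) • T (s * σ) (((R s) ^ (n+1)) y) := by
      rw [pow_succ']
      have : ((R s) * ((R s) ^ (n+1))) y = R s (((R s) ^ (n+1)) y) := rfl
      rw [this, laplace_rep hT0 hTadd hTcont hTbound hR' hs]
    -- inner integral, after pulling T inside and shifting
    set V : ℝ → ℝ → X := fun σ u =>
      ({p : ℝ × ℝ | 0 < p.1 ∧ p.1 < p.2}).indicator
        (fun p => (Real.exp (-p.1) * gam n (p.2 - p.1)) • T (s * p.2) y) (σ, u) with hV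
    have hS : MeasurableSet {p : ℝ × ℝ | 0 < p.1 ∧ p.1 < p.2} := by
      refine MeasurableSet.inter ?_ ?_
      · exact measurableSet_lt measurable_const measurable_fst
      · exact measurableSet_lt measurable_fst measurable_snd
    have hVeq : ∀ σ : ℝ, 0 < σ → ∀ u : ℝ,
        V σ u = (Ioi σ).indicator (fun u => (Real.exp (-σ) * gam n (u - σ)) • T (s * u) y) u := by
      intro σ hσ u
      rw [hV]
      simp only [indicator_apply, mem_setOf_eq, mem_Ioi, hσ, true_and]
    have hVzero : ∀ σ : ℝ, σ ≤ 0 → ∀ u : ℝ, V σ u = 0 := by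
      intro σ hσ u
      refine indicator_of_notMem ?_ _
      rintro ⟨h1', -⟩
      exact absurd h1' (not_lt.mpr hσ)
    -- inner equality for σ > 0
    have h2 : ∀ σ : ℝ, 0 < σ →
        Real.exp (-σ) • T (s * σ) (((R s) ^ (n+1)) y) = ∫ u, V σ u := by
      intro σ hσ
      rw [ih, T_pull_in hTadd hTcont hTbound y hs.le (mul_nonneg hs.le hσ.le)
        (integrableOn_gam n) hgam_pos]
      rw [← integral_smul]
      have e1 : ∀ τ ∈ Ioi (0:ℝ), Real.exp (-σ) • gam n τ • T (s * σ + s * τ) y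
          = (fun u => (Real.exp (-σ) * gam n (u - σ)) • T (s * u) y) (τ + σ) := by
        intro τ hτ
        simp only [smul_smul, add_sub_cancel_right]
        congr 2
        ring
      rw [setIntegral_congr_fun measurableSet_Ioi e1,
        ← integral_shift_Ioi (fun u => (Real.exp (-σ) * gam n (u - σ)) • T (s * u) y) σ]
      rw [← integral_indicator measurableSet_Ioi]
      refine integral_congr_ae (Eventually.of_forall ?_)
      intro u
      rw [hVeq σ hσ u]
    -- integrability of uncurried V
    have hVasm : AEStronglyMeasurable (Function.uncurry V) ((volume : Measure ℝ).prod volume) := by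
      have : Function.uncurry V = ({p : ℝ × ℝ | 0 < p.1 ∧ p.1 < p.2}).indicator
          (fun p => (Real.exp (-p.1) * gam n (p.2 - p.1)) • T (s * p.2) y) := by
        ext p
        rw [hV]
        rfl
      rw [this, aestronglyMeasurable_indicator_iff hS]
      refine ContinuousOn.aestronglyMeasurable ?_ hS
      refine ContinuousOn.smul (f := fun p : ℝ × ℝ => Real.exp (-p.1) * gam n (p.2 - p.1)) ?_ ?_
      · refine Continuous.continuousOn ?_
        have : Continuous (gam n) := gam_cont n
        fun_prop
      · refine (hTcont y).comp ((continuous_const.mul continuous_snd).continuousOn) ?_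
        rintro ⟨σ, u⟩ ⟨hσ, hσu⟩
        exact mul_nonneg hs.le (by simp only; linarith)
    have hVint_inner : ∀ σ : ℝ, Integrable (V σ) := by
      intro σ
      rcases le_or_gt σ 0 with hσ | hσ
      · refine (integrable_zero _ _ _).congr (Eventually.of_forall ?_)
        intro u
        exact (hVzero σ hσ u).symm
      · have : Integrable ((Ioi σ).indicator
            (fun u => (Real.exp (-σ) * gam n (u - σ)) • T (s * u) y)) := by
          rw [integrable_indicator_iff measurableSet_Ioi]
          have hmaj : IntegrableOn (fun u => (Real.exp (-σ) * gam n (u - σ)) * (M * ‖y‖))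
              (Ioi σ) := ((integrableOn_shift (integrableOn_gam n) σ).const_mul
                (Real.exp (-σ))).mul_const (M * ‖y‖)
          refine Integrable.mono' hmaj ?_ ?_
          · refine AEStronglyMeasurable.smul (f := fun u => Real.exp (-σ) * gam n (u - σ)) ?_ ?_
            · refine Continuous.aestronglyMeasurable ?_
              have : Continuous (gam n) := gam_cont n
              fun_prop
            · refine ContinuousOn.aestronglyMeasurable ?_ measurableSet_Ioi
              refine (hTcont y).comp ((continuous_const.mul continuous_id).continuousOn) ?_
              intro u hu
              exact mul_nonneg hs.le (le_of_lt (lt_trans hσ hu))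
          · rw [ae_restrict_iff' measurableSet_Ioi]
            filter_upwards with u hu
            rw [norm_smul, Real.norm_eq_abs, abs_of_nonneg
              (mul_nonneg (Real.exp_pos _).le (gam_nonneg n (by linarith [mem_Ioi.mp hu])))]
            refine mul_le_mul_of_nonneg_left ?_
              (mul_nonneg (Real.exp_pos _).le (gam_nonneg n (by linarith [mem_Ioi.mp hu])))
            exact norm_T_apply_le hTbound y (mul_nonneg hs.le (le_of_lt (lt_trans hσ hu)))
        refine this.congr (Eventually.of_forall ?_)
        intro u
        exact (hVeq σ hσ u).symm
    have hVint : Integrable (Function.uncurry V) ((volume : Measure ℝ).prod volume) := by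
      rw [integrable_prod_iff hVasm]
      constructor
      · exact Eventually.of_forall hVint_inner
      · -- bound the inner norm integral
        have hbnd : ∀ σ : ℝ, (∫ u, ‖V σ u‖)
            ≤ (Ioi (0:ℝ)).indicator (fun σ => Real.exp (-σ) * (M * ‖y‖)) σ := by
          intro σ
          rcases le_or_gt σ 0 with hσ | hσ
          · rw [indicator_of_notMem (by simpa using hσ)]
            have : ∀ u : ℝ, ‖V σ u‖ = 0 := fun u => by rw [hVzero σ hσ u, norm_zero]
            simp [this]
          · rw [indicator_of_mem (mem_Ioi.mpr hσ)]
            have hmaj : Integrable (fun u => (Ioi σ).indicator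
                (fun u => (Real.exp (-σ) * gam n (u - σ)) * (M * ‖y‖)) u) := by
              rw [integrable_indicator_iff measurableSet_Ioi]
              exact ((integrableOn_shift (integrableOn_gam n) σ).const_mul
                (Real.exp (-σ))).mul_const (M * ‖y‖)
            have step : (∫ u, ‖V σ u‖) ≤ ∫ u, (Ioi σ).indicator
                (fun u => (Real.exp (-σ) * gam n (u - σ)) * (M * ‖y‖)) u := by
              refine integral_mono ((hVint_inner σ).norm) hmaj ?_
              intro u
              dsimp only
              rw [hVeq σ hσ u]
              rcases le_or_gt u σ with hu | hu
              · rw [indicator_of_notMem (by simpa using hu),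
                  indicator_of_notMem (by simpa using hu), norm_zero]
              · rw [indicator_of_mem (mem_Ioi.mpr hu), indicator_of_mem (mem_Ioi.mpr hu),
                  norm_smul, Real.norm_eq_abs, abs_of_nonneg
                    (mul_nonneg (Real.exp_pos _).le (gam_nonneg n (by linarith)))]
                refine mul_le_mul_of_nonneg_left ?_
                  (mul_nonneg (Real.exp_pos _).le (gam_nonneg n (by linarith)))
                exact norm_T_apply_le hTbound y (mul_nonneg hs.le (by linarith))
            refine le_trans step ?_
            rw [integral_indicator measurableSet_Ioi]
            have : ∀ x ∈ Ioi σ, (Real.exp (-σ) * gam n (x - σ)) * (M * ‖y‖)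
                = (Real.exp (-σ) * (M * ‖y‖)) * gam n (x - σ) := by
              intro x hx; ring
            rw [setIntegral_congr_fun measurableSet_Ioi this, integral_const_mul]
            have hshift : ∫ u in Ioi σ, gam n (u - σ) = ∫ u in Ioi 0, gam n u := by
              rw [integral_shift_Ioi (fun u => gam n (u - σ)) σ]
              simp
            rw [hshift, integral_gam, mul_one]
        refine Integrable.mono'
          (g := (Ioi (0:ℝ)).indicator (fun σ => Real.exp (-σ) * (M * ‖y‖)))
          ?_ ?_ (Eventually.of_forall ?_)
        · rw [integrable_indicator_iff measurableSet_Ioi]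
          exact integrableOn_exp_neg'.mul_const (M * ‖y‖)
        · exact hVasm.norm.integral_prod_right'
        · intro σ
          rw [Real.norm_eq_abs, abs_of_nonneg (integral_nonneg (fun u => norm_nonneg _))]
          exact hbnd σ
    -- swap
    have h3 : ((R s) ^ (n+2)) y = ∫ u, ∫ σ, V σ u := by
      rw [h1]
      have e1 : ∫ σ in Ioi 0, Real.exp (-σ) • T (s * σ) (((R s) ^ (n+1)) y)
          = ∫ σ in Ioi 0, ∫ u, V σ u := by
        refine setIntegral_congr_fun measurableSet_Ioi ?_
        intro σ hσ
        exact h2 σ hσ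
      rw [e1, setIntegral_eq_integral_of_forall_compl_eq_zero (f := fun σ => ∫ u, V σ u) ?_,
        integral_integral_swap hVint]
      intro σ hσ
      have hσ0 : σ ≤ 0 := by simpa using hσ
      have : ∀ u : ℝ, V σ u = 0 := hVzero σ hσ0
      simp [this]
    -- evaluate inner integral
    have h4 : ∀ u : ℝ, 0 < u → (∫ σ, V σ u) = gam (n+1) u • T (s * u) y := by
      intro u hu
      have e1 : ∀ σ : ℝ, V σ u = (Ioo 0 u).indicator
          (fun σ => (Real.exp (-σ) * gam n (u - σ)) • T (s * u) y) σ := by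
        intro σ
        rw [hV]
        simp only [indicator_apply, mem_setOf_eq, mem_Ioo]
      simp_rw [e1]
      rw [integral_indicator measurableSet_Ioo]
      rw [integral_smul_const]
      congr 1
      have e2 : ∀ σ ∈ Ioo (0:ℝ) u, Real.exp (-σ) * gam n (u - σ)
          = (Real.exp (-u) / n.factorial) * (u - σ)^n := by
        intro σ hσ
        unfold gam
        have key : Real.exp (-σ) * Real.exp (-(u - σ)) = Real.exp (-u) := by
          rw [← Real.exp_add]; congr 1; ring
        rw [show Real.exp (-σ) * ((u-σ)^n * Real.exp (-(u-σ)) / (n.factorial:ℝ))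
            = ((u-σ)^n * (Real.exp (-σ) * Real.exp (-(u-σ)))) / (n.factorial:ℝ) from by ring,
          key]
        ring
      rw [setIntegral_congr_fun measurableSet_Ioo e2, integral_const_mul]
      rw [← integral_Ioc_eq_integral_Ioo, ← intervalIntegral.integral_of_le hu.le]
      rw [intervalIntegral.integral_comp_sub_left (fun x => x ^ n) u]
      simp only [sub_self, sub_zero]
      rw [integral_pow]
      unfold gam
      rw [Nat.factorial_succ]
      push_cast
      field_simp
      ring
    -- final assembly
    rw [h3, ← setIntegral_eq_integral_of_forall_compl_eq_zero (s := Ioi (0:ℝ))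
      (f := fun u => ∫ σ, V σ u) ?_]
    · refine setIntegral_congr_fun measurableSet_Ioi ?_
      intro u hu
      exact h4 u hu
    · intro u hu
      have hu0 : u ≤ 0 := by simpa using hu
      have : ∀ σ : ℝ, V σ u = 0 := by
        intro σ
        refine indicator_of_notMem ?_ _
        rintro ⟨h1', h2'⟩
        simp only at h1' h2'
        linarith
      simp [this]

theorem exponential_formula_uniform'
    (hT0 : T 0 = 1)
    (hTadd : ∀ s t : ℝ, 0 ≤ s → 0 ≤ t → T (s + t) = (T s).comp (T t))
    (hTcont : ∀ x : X, ContinuousOn (fun t : ℝ => T t x) (Set.Ici 0))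
    (hTbound : ∀ t : ℝ, 0 ≤ t → ‖T t‖ ≤ M)
    (R : ℝ → X →L[ℂ] X) (hR0 : R 0 = 1)
    (hR' : ∀ s : ℝ, 0 < s → ∀ x y : X, IsGenPoint T x y → R s (x - (s:ℂ) • y) = x) :
    ∀ x : X, ∀ t₁ : ℝ, 0 < t₁ →
      TendstoUniformlyOn (fun (n : ℕ) (t : ℝ) => ((R (t / n)) ^ n) x)
        (fun t => T t x) atTop (Set.Icc 0 t₁) := by
  intro x t₁ ht₁
  have hM0 : 0 ≤ M := le_trans (norm_nonneg (T 0)) (hTbound 0 le_rfl)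
  rw [Metric.tendstoUniformlyOn_iff]
  intro ε hε
  -- uniform continuity on [0, 2t₁]
  have hcont : ContinuousOn (fun u : ℝ => T u x) (Icc 0 (2*t₁)) :=
    (hTcont x).mono (fun u hu => hu.1)
  have huc : UniformContinuousOn (fun u : ℝ => T u x) (Icc 0 (2*t₁)) :=
    isCompact_Icc.uniformContinuousOn_of_continuous hcont
  rw [Metric.uniformContinuousOn_iff] at huc
  obtain ⟨δ, hδpos, hδ⟩ := huc (ε/4) (by positivity)
  set η := min 1 (δ / (2 * t₁)) with hη
  have hηpos : 0 < η := lt_min one_pos (by positivity)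
  have hη1 : η ≤ 1 := min_le_left _ _
  have hηδ : η ≤ δ / (2 * t₁) := min_le_right _ _
  -- pointwise bound
  have hpt : ∀ n : ℕ, 1 ≤ n → ∀ t ∈ Icc (0:ℝ) t₁, ∀ τ ∈ Ioi (0:ℝ),
      ‖T (t/(n:ℝ) * τ) x - T t x‖
        ≤ ε/4 + (2 * (M * ‖x‖)) / (η*(n:ℝ))^2 * (τ - (n:ℝ))^2 := by
    intro n hn t ht τ hτ
    have hn0 : (0:ℝ) < (n:ℝ) := by exact_mod_cast hn
    have ht0 : 0 ≤ t := ht.1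
    have ht1 : t ≤ t₁ := ht.2
    have hτ0 : 0 < τ := hτ
    rcases le_or_gt |τ - (n:ℝ)| (η * (n:ℝ)) with hcase | hcase
    · -- close case: use uniform continuity
      have habs : |t/(n:ℝ)*τ - t| ≤ t * η := by
        have he : t/(n:ℝ)*τ - t = t/(n:ℝ) * (τ - (n:ℝ)) := by
          field_simp
        rw [he, abs_mul, abs_of_nonneg (by positivity : (0:ℝ) ≤ t/(n:ℝ))]
        calc t/(n:ℝ) * |τ - (n:ℝ)| ≤ t/(n:ℝ) * (η * (n:ℝ)) :=
              mul_le_mul_of_nonneg_left hcase (by positivity)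
          _ = t * η := by field_simp
      have htη : t * η ≤ t₁ := by
        calc t * η ≤ t₁ * 1 := mul_le_mul ht1 hη1 hηpos.le ht₁.le
          _ = t₁ := mul_one _
      have habs' := abs_le.mp habs
      have harg1 : t/(n:ℝ)*τ ∈ Icc (0:ℝ) (2*t₁) := by
        constructor
        · positivity
        · linarith [habs'.2]
      have harg2 : t ∈ Icc (0:ℝ) (2*t₁) := ⟨ht0, by linarith⟩
      have hdist : dist (t/(n:ℝ)*τ) t < δ := by
        rw [Real.dist_eq]
        have htηδ : t * η ≤ δ / 2 := by
          calc t * η ≤ t₁ * (δ / (2*t₁)) := mul_le_mul ht1 hηδ hηpos.le ht₁.le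
            _ = δ / 2 := by field_simp
        calc |t/(n:ℝ)*τ - t| ≤ t * η := habs
          _ ≤ δ / 2 := htηδ
          _ < δ := by linarith
      have hd := hδ _ harg1 _ harg2 hdist
      rw [dist_eq_norm] at hd
      have hsq : 0 ≤ (2 * (M * ‖x‖)) / (η*(n:ℝ))^2 * (τ - (n:ℝ))^2 := by positivity
      linarith [hd.le]
    · -- far case: crude bound
      have hLHS : ‖T (t/(n:ℝ)*τ) x - T t x‖ ≤ 2*(M*‖x‖) := by
        calc ‖T (t/(n:ℝ)*τ) x - T t x‖ ≤ ‖T (t/(n:ℝ)*τ) x‖ + ‖T t x‖ := norm_sub_le _ _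
          _ ≤ M*‖x‖ + M*‖x‖ := add_le_add
              (norm_T_apply_le hTbound x (by positivity))
              (norm_T_apply_le hTbound x ht0)
          _ = 2*(M*‖x‖) := by ring
      have h2 : (η*(n:ℝ))^2 ≤ (τ - (n:ℝ))^2 := by
        calc (η*(n:ℝ))^2 ≤ |τ - (n:ℝ)|^2 := by
              refine pow_le_pow_left₀ (by positivity) hcase.le 2
          _ = (τ - (n:ℝ))^2 := sq_abs _
      have hge : 2*(M*‖x‖) ≤ (2*(M*‖x‖)) / (η*(n:ℝ))^2 * (τ - (n:ℝ))^2 := by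
        calc 2*(M*‖x‖) = (2*(M*‖x‖)) / (η*(n:ℝ))^2 * (η*(n:ℝ))^2 := by field_simp
          _ ≤ (2*(M*‖x‖)) / (η*(n:ℝ))^2 * (τ - (n:ℝ))^2 :=
              mul_le_mul_of_nonneg_left h2 (by positivity)
      linarith
  -- eventual bound on tail
  have hev2 : ∀ᶠ n : ℕ in atTop, (2*(M*‖x‖) + 1) / (η^2 * (n:ℝ)) < ε/4 := by
    have hlim : Tendsto (fun n : ℕ => (2*(M*‖x‖) + 1) / (η^2 * (n:ℝ))) atTop (nhds 0) := by
      have h1 : Tendsto (fun n : ℕ => ((2*(M*‖x‖) + 1)/η^2) * (1/(n:ℝ))) atTop (nhds 0) := by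
        have h := tendsto_one_div_atTop_nhds_zero_nat.const_mul ((2*(M*‖x‖) + 1)/η^2)
        rw [mul_zero] at h; exact h
      refine h1.congr ?_
      intro n
      field_simp
    exact hlim.eventually_lt_const (by positivity)
  filter_upwards [eventually_ge_atTop 1, hev2] with n hn1 hn2
  intro t ht
  obtain ⟨m, rfl⟩ : ∃ m, n = m + 1 := ⟨n-1, (Nat.succ_pred_eq_of_pos hn1).symm⟩
  set n := m + 1 with hdef
  have hn0 : (0:ℝ) < (n:ℝ) := by positivity
  -- representation
  have hrep : ((R (t/(n:ℝ))) ^ n) x = ∫ τ in Ioi 0, gam m τ • T (t/(n:ℝ) * τ) x := by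
    rcases eq_or_lt_of_le ht.1 with h0 | h0
    · rw [← h0]
      simp only [zero_div, hR0, one_pow, ContinuousLinearMap.one_apply, zero_mul, hT0,
        ContinuousLinearMap.one_apply]
      rw [integral_smul_const, integral_gam, one_smul]
    · exact pow_rep hT0 hTadd hTcont hTbound hR' (div_pos h0 hn0) x m
  have hTtx : T t x = ∫ τ in Ioi 0, gam m τ • T t x := by
    rw [integral_smul_const, integral_gam, one_smul]
  -- integrabilities
  have hgam_pos : ∀ τ ∈ Ioi (0:ℝ), 0 ≤ gam m τ := fun τ hτ => gam_nonneg m (le_of_lt hτ)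
  have hint1 : IntegrableOn (fun τ => gam m τ • T (t/(n:ℝ) * τ) x) (Ioi 0) := by
    have := int_aux hTcont hTbound x (div_nonneg ht.1 hn0.le) le_rfl
      (integrableOn_gam m) hgam_pos
    simpa using this
  have hint2 : IntegrableOn (fun τ => gam m τ • T t x) (Ioi 0) :=
    (integrableOn_gam m).smul_const _
  have hdiff : ((R (t/(n:ℝ))) ^ n) x - T t x
      = ∫ τ in Ioi 0, gam m τ • (T (t/(n:ℝ) * τ) x - T t x) := by
    rw [hrep]
    nth_rewrite 1 [hTtx]
    rw [← integral_sub hint1 hint2]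
    refine setIntegral_congr_fun measurableSet_Ioi ?_
    intro τ hτ
    dsimp only
    rw [smul_sub]
  -- bound
  set C := (2 * (M * ‖x‖)) / (η*(n:ℝ))^2 with hC
  have hbound_int : IntegrableOn
      (fun τ => ε/4 * gam m τ + C * ((τ - (n:ℝ))^2 * gam m τ)) (Ioi 0) :=
    ((integrableOn_gam m).const_mul (ε/4)).add
      ((integrableOn_sq_sub_mul_gam m ((n:ℝ))).const_mul C)
  have hnorm : ‖((R (t/(n:ℝ))) ^ n) x - T t x‖
      ≤ ∫ τ in Ioi 0, (ε/4 * gam m τ + C * ((τ - (n:ℝ))^2 * gam m τ)) := by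
    rw [hdiff]
    refine norm_integral_le_of_norm_le hbound_int ?_
    rw [ae_restrict_iff' measurableSet_Ioi]
    filter_upwards with τ hτ
    rw [norm_smul, Real.norm_eq_abs, abs_of_nonneg (gam_nonneg m (le_of_lt hτ))]
    have hb := hpt n hn1 t ht τ hτ
    calc gam m τ * ‖T (t/(n:ℝ) * τ) x - T t x‖
        ≤ gam m τ * (ε/4 + C * (τ - (n:ℝ))^2) :=
          mul_le_mul_of_nonneg_left hb (gam_nonneg m (le_of_lt hτ))
      _ = ε/4 * gam m τ + C * ((τ - (n:ℝ))^2 * gam m τ) := by ring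
  -- compute the bounding integral
  have hval : ∫ τ in Ioi 0, (ε/4 * gam m τ + C * ((τ - (n:ℝ))^2 * gam m τ))
      = ε/4 + C * ((m:ℝ) + 1) := by
    rw [integral_add ((integrableOn_gam m).const_mul (ε/4))
      ((integrableOn_sq_sub_mul_gam m ((n:ℝ))).const_mul C),
      MeasureTheory.integral_const_mul, MeasureTheory.integral_const_mul, integral_gam, mul_one]
    have hcast : ((n:ℕ):ℝ) = (m:ℝ) + 1 := by rw [hdef]; push_cast; ring
    congr 1
    rw [show ((n:ℕ):ℝ) = (m:ℝ)+1 from by rw [hdef]; push_cast; ring]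
    rw [integral_gam_var m]
  -- final estimate
  have hC2 : C * ((m:ℝ) + 1) < ε/4 := by
    have he : C * ((m:ℝ)+1) = 2*(M*‖x‖) / (η^2 * ((m:ℝ)+1)) := by
      rw [hC]
      have : ((n:ℕ):ℝ) = (m:ℝ)+1 := by rw [hdef]; push_cast; ring
      rw [this]
      field_simp
    have hle : 2*(M*‖x‖) / (η^2 * ((m:ℝ)+1)) ≤ (2*(M*‖x‖)+1) / (η^2 * ((m:ℝ)+1)) := by
      gcongr
      linarith
    have hcast : ((n:ℕ):ℝ) = (m:ℝ)+1 := by rw [hdef]; push_cast; ring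
    rw [hcast] at hn2
    linarith
  rw [dist_eq_norm']
  calc ‖((R (t/(n:ℝ))) ^ n) x - T t x‖
      ≤ ε/4 + C * ((m:ℝ) + 1) := by rw [← hval]; exact hnorm
    _ < ε/4 + ε/4 := by linarith
    _ < ε := by linarith

end Main

/-- Exponential formula (Pazy, Theorem I.8.3): for a bounded `C₀`-semigroup `T`
with generator `A`, `(I − (t/n)A)^{−n} x → T(t)x` uniformly for `t ∈ [0, t₁]`.
Here `R s = (I − sA)⁻¹` is characterized via the graph of the generator, with
`R 0 = I`. -/
theorem exponential_formula_uniform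
    (X : Type*) [NormedAddCommGroup X] [NormedSpace ℂ X] [CompleteSpace X]
    (T : ℝ → X →L[ℂ] X) (M : ℝ)
    (hT0 : T 0 = 1)
    (hTadd : ∀ s t : ℝ, 0 ≤ s → 0 ≤ t → T (s + t) = (T s).comp (T t))
    (hTcont : ∀ x : X, ContinuousOn (fun t : ℝ => T t x) (Set.Ici 0))
    (hTbound : ∀ t : ℝ, 0 ≤ t → ‖T t‖ ≤ M)
    (R : ℝ → X →L[ℂ] X) (hR0 : R 0 = 1)
    (hR : ∀ s : ℝ, 0 < s → ∀ y : X,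
      IsGenPoint T (R s y) ((s : ℂ)⁻¹ • (R s y - y)))
    (hR' : ∀ s : ℝ, 0 < s → ∀ x y : X,
      IsGenPoint T x y → R s (x - (s : ℂ) • y) = x) :
    ∀ x : X, ∀ t₁ : ℝ, 0 < t₁ →
      TendstoUniformlyOn (fun (n : ℕ) (t : ℝ) => ((R (t / n)) ^ n) x)
        (fun t => T t x) atTop (Set.Icc 0 t₁) := by
  exact exponential_formula_uniform' hT0 hTadd hTcont hTbound R hR0 hR'
end
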